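/- arXiv:2605.17736 — 5 statements merged into one kernel-verified Lean document; each statement's English description precedes it below -/
import Mathlib

section
/- Let Q be a regular local ring with maximal ideal n, and let f₁,…,f_c (c ≥ 2) be a regular sequence in Q. In the polynomial ring P = Q[x₁,…,x_c], the element w = f₁x₁ + ⋯ + f_c x_c is irreducible. -/
open IsLocalRing
open scoped Pointwise

/-- A regular local ring: a commutative Noetherian local ring whose Krull dimension
equals the minimal number of generators of its maximal ideal, i.e. the dimension of
its cotangent space `n/n²` over the residue field. -/
def IsRegularLocal (Q : Type*) [CommRing Q] [IsLocalRing Q] [IsNoetherianRing Q] : Prop :=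
  ringKrullDim Q =
    (Module.finrank (ResidueField Q) (CotangentSpace Q) : WithBot (WithTop ℕ))

section GenericHypersurfaceAux

open MvPolynomial

variable {Q : Type*} [CommRing Q]

/-- McCoy-type lemma: `w = ∑ C (f i) * X i` is a nonzerodivisor provided `f 0` is one. -/
private lemma aux_w_regular {k : ℕ} (f : Fin (k + 2) → Q)
    (hf0 : ∀ x : Q, f 0 * x = 0 → x = 0)
    (g : MvPolynomial (Fin (k + 2)) Q)
    (hg : g * (∑ i, C (f i) * X i) = 0) : g = 0 := by
  by_contra hne
  have hsupp : g.support.Nonempty := by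
    rwa [Finset.nonempty_iff_ne_empty, ne_eq, MvPolynomial.support_eq_empty]
  obtain ⟨μ, hμ, hmax⟩ := Finset.exists_max_image g.support (fun m => m 0) hsupp
  set ν : Fin (k+2) →₀ ℕ := μ + Finsupp.single 0 1 with hν
  have hν0 : ν 0 = μ 0 + 1 := by simp [hν]
  have hcoeff : coeff ν (g * (∑ i, C (f i) * X i)) = f 0 * coeff μ g := by
    rw [Finset.mul_sum]
    rw [Finset.sum_congr rfl (fun i _ => show g * (C (f i) * X i) = (C (f i) * g) * X i by ring)]
    rw [MvPolynomial.coeff_sum]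
    rw [Finset.sum_congr rfl (fun i _ => MvPolynomial.coeff_mul_X' ν i (C (f i) * g))]
    rw [Finset.sum_eq_single (0 : Fin (k+2))]
    · have h0mem : (0 : Fin (k+2)) ∈ ν.support := by
        rw [Finsupp.mem_support_iff, hν0]; omega
      rw [if_pos h0mem]
      have hsub : ν - Finsupp.single 0 1 = μ := by
        rw [hν, add_tsub_cancel_right]
      rw [hsub, MvPolynomial.coeff_C_mul]
    · intro i _ hi
      by_cases hmem : i ∈ ν.support
      · rw [if_pos hmem, MvPolynomial.coeff_C_mul]
        have : coeff (ν - Finsupp.single i 1) g = 0 := by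
          rw [← MvPolynomial.notMem_support_iff]
          intro hin
          have := hmax _ hin
          have hval := Finsupp.tsub_apply ν (Finsupp.single i 1) 0
          rw [hν0, Finsupp.single_apply, if_neg hi] at hval
          omega
        rw [this, mul_zero]
      · rw [if_neg hmem]
    · intro h; exact absurd (Finset.mem_univ _) h
  rw [hg, MvPolynomial.coeff_zero] at hcoeff
  have := hf0 _ hcoeff.symm
  rw [← MvPolynomial.notMem_support_iff] at this
  exact this hμ

/-- A divisor of `w = ∑ C (f i) * X i` whose constant coefficient is a unit is a unit,
provided `w` is a nonzerodivisor. -/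
private lemma aux_isUnit_of_dvd_w {k : ℕ} (f : Fin (k + 2) → Q)
    (hreg : ∀ g : MvPolynomial (Fin (k + 2)) Q,
      g * (∑ i, C (f i) * X i) = 0 → g = 0)
    (p : MvPolynomial (Fin (k + 2)) Q)
    (hdvd : p ∣ (∑ i, C (f i) * X i))
    (hu : IsUnit (constantCoeff p)) : IsUnit p := by
  classical
  set w : MvPolynomial (Fin (k + 2)) Q := ∑ i, C (f i) * X i with hw
  obtain ⟨m, hm⟩ := hdvd
  set ψ : MvPolynomial (Fin (k + 2)) Q →+* Polynomial (MvPolynomial (Fin (k + 2)) Q) :=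
    MvPolynomial.eval₂Hom (Polynomial.C.comp MvPolynomial.C)
      (fun i => Polynomial.C (MvPolynomial.X i) * Polynomial.X) with hψ
  have hψw : ψ w = Polynomial.C w * Polynomial.X := by
    rw [hw, map_sum]
    have key : ∀ i : Fin (k+2), ψ (C (f i) * X i)
        = Polynomial.C (C (f i) * X i) * Polynomial.X := by
      intro i
      rw [map_mul]
      have h1 : ψ (C (f i)) = Polynomial.C (MvPolynomial.C (f i)) := by simp [hψ]
      have h2 : ψ (X i) = Polynomial.C (MvPolynomial.X i) * Polynomial.X := by simp [hψ]
      rw [h1, h2, ← mul_assoc, ← map_mul]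
    rw [Finset.sum_congr rfl (fun i _ => key i), ← Finset.sum_mul, ← map_sum]
  have heval : ∀ q : MvPolynomial (Fin (k + 2)) Q, (ψ q).eval 1 = q := by
    intro q
    have hcomp : (Polynomial.evalRingHom (1 : MvPolynomial (Fin (k + 2)) Q)).comp ψ
        = RingHom.id _ := by
      apply MvPolynomial.ringHom_ext
      · intro q; simp [hψ]
      · intro i; simp [hψ]
    have := congrArg (fun φ => φ q) hcomp
    simpa using this
  have hcc : ∀ q : MvPolynomial (Fin (k + 2)) Q,
      (ψ q).coeff 0 = MvPolynomial.C (constantCoeff q) := by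
    intro q
    have hcomp : (Polynomial.constantCoeff).comp ψ
        = (MvPolynomial.C (σ := Fin (k+2))).comp (MvPolynomial.constantCoeff) := by
      apply MvPolynomial.ringHom_ext
      · intro q; simp [hψ, Polynomial.constantCoeff_apply]
      · intro i; simp [hψ, Polynomial.constantCoeff_apply]
    have := congrArg (fun φ => φ q) hcomp
    simpa [Polynomial.constantCoeff_apply] using this
  -- move to power series
  set B : PowerSeries (MvPolynomial (Fin (k + 2)) Q) :=
    (↑(ψ p) : PowerSeries (MvPolynomial (Fin (k + 2)) Q)) with hB
  have hBc : PowerSeries.constantCoeff B = MvPolynomial.C (constantCoeff p) := by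
    rw [hB, ← PowerSeries.coeff_zero_eq_constantCoeff_apply, Polynomial.coeff_coe, hcc]
  have hu' : IsUnit (PowerSeries.constantCoeff B) := by
    rw [hBc]; exact hu.map (MvPolynomial.C (σ := Fin (k+2)))
  set V : PowerSeries (MvPolynomial (Fin (k + 2)) Q) :=
    PowerSeries.invOfUnit B hu'.unit with hV
  have hinv : B * V = 1 :=
    PowerSeries.mul_invOfUnit B hu'.unit (hu'.unit_spec).symm
  have hprod : B * (↑(ψ m) : PowerSeries (MvPolynomial (Fin (k + 2)) Q))
      = PowerSeries.C w * PowerSeries.X := by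
    rw [hB, ← Polynomial.coe_mul, ← map_mul, ← hm, hψw, Polynomial.coe_mul,
      Polynomial.coe_C, Polynomial.coe_X]
  have hMV : (↑(ψ m) : PowerSeries (MvPolynomial (Fin (k + 2)) Q))
      = V * PowerSeries.C w * PowerSeries.X := by
    calc (↑(ψ m) : PowerSeries (MvPolynomial (Fin (k + 2)) Q))
        = (V * B) * (↑(ψ m) : PowerSeries (MvPolynomial (Fin (k + 2)) Q)) := by
          rw [mul_comm V B, hinv, one_mul]
      _ = V * (B * (↑(ψ m) : PowerSeries (MvPolynomial (Fin (k + 2)) Q))) := by ring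
      _ = V * PowerSeries.C w * PowerSeries.X := by rw [hprod]; ring
  set N := (ψ m).natDegree with hN
  have hcoeffV : ∀ n, N ≤ n → PowerSeries.coeff n V = 0 := by
    intro n hn
    apply hreg
    have h3 : PowerSeries.coeff (n+1) (↑(ψ m) : PowerSeries (MvPolynomial (Fin (k + 2)) Q))
        = PowerSeries.coeff n V * w := by
      rw [hMV, PowerSeries.coeff_succ_mul_X, PowerSeries.coeff_mul_C]
    rw [Polynomial.coeff_coe] at h3
    rw [← h3]
    exact Polynomial.coeff_eq_zero_of_natDegree_lt (by omega)
  set Vp : Polynomial (MvPolynomial (Fin (k + 2)) Q) :=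
    ∑ n ∈ Finset.range (N + 1), Polynomial.monomial n (PowerSeries.coeff n V) with hVp
  have hVpV : (Vp : PowerSeries (MvPolynomial (Fin (k + 2)) Q)) = V := by
    apply PowerSeries.ext
    intro j
    rw [Polynomial.coeff_coe, hVp, Polynomial.finset_sum_coeff]
    simp only [Polynomial.coeff_monomial]
    by_cases hj : j < N + 1
    · rw [Finset.sum_ite_eq' (Finset.range (N+1)) j, if_pos (Finset.mem_range.mpr hj)]
    · rw [Finset.sum_eq_zero, hcoeffV j (by omega)]
      intro n hn
      rw [if_neg]
      intro hEq
      rw [hEq] at hn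
      exact hj (Finset.mem_range.mp hn)
  have hpoly : ψ p * Vp = 1 := by
    apply Polynomial.coe_inj.mp
    rw [Polynomial.coe_mul, hVpV, Polynomial.coe_one, ← hB, hinv]
  have hfin := congrArg (Polynomial.eval (1 : MvPolynomial (Fin (k + 2)) Q)) hpoly
  rw [Polynomial.eval_mul, heval p, Polynomial.eval_one] at hfin
  exact IsUnit.of_mul_eq_one _ hfin

/-- If `f₀ = q·c₀`, `f₁ = q·c₁` with `q` a nonunit, and `(f₀, f₁)` behaves like the start
of a regular sequence, we get a contradiction. -/
private lemma aux_no_small_factor [IsLocalRing Q] (f0 f1 : Q)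
    (hf0 : ∀ x : Q, f0 * x = 0 → x = 0)
    (hf1 : ∀ x : Q, f1 * x ∈ Ideal.span {f0} → x ∈ Ideal.span {f0})
    (q c0 c1 : Q) (hq : ¬ IsUnit q)
    (h0 : f0 = q * c0) (h1 : f1 = q * c1) : False := by
  have hmem : f1 * c0 ∈ Ideal.span {f0} :=
    Ideal.mem_span_singleton.mpr ⟨c1, by linear_combination c0 * h1 - c1 * h0⟩
  obtain ⟨s, hs⟩ := Ideal.mem_span_singleton.mp (hf1 _ hmem)
  have hqs : ¬ IsUnit (q * s) := fun h => hq (isUnit_of_mul_isUnit_left h)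
  have hunit : IsUnit (1 - q * s) :=
    IsLocalRing.isUnit_one_sub_self_of_mem_nonunits _ (mem_nonunits_iff.mpr hqs)
  have hc0 : c0 * (1 - q * s) = 0 * (1 - q * s) := by
    rw [zero_mul]; linear_combination hs + s * h0
  have hc00 : c0 = 0 := hunit.mul_right_cancel hc0
  have hzero : f0 = 0 := by rw [h0, hc00, mul_zero]
  have : (1 : Q) = 0 := hf0 1 (by rw [hzero, zero_mul])
  exact one_ne_zero this

end GenericHypersurfaceAux

/-- Let `Q` be a regular local ring and `f₁, …, f_c` (`c ≥ 2`) a regular sequence in `Q`.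
Then `w = f₁x₁ + ⋯ + f_cx_c` is irreducible in the polynomial ring `P = Q[x₁, …, x_c]`. -/
theorem generic_hypersurface_irreducible
    (Q : Type*) [CommRing Q] [IsLocalRing Q] [IsNoetherianRing Q]
    (hQ : IsRegularLocal Q)
    (c : ℕ) (hc : 2 ≤ c) (f : Fin c → Q)
    (hf : RingTheory.Sequence.IsRegular Q (List.ofFn f)) :
    Irreducible (∑ i, MvPolynomial.C (f i) * MvPolynomial.X i :
      MvPolynomial (Fin c) Q) := by
  classical
  obtain ⟨k, rfl⟩ : ∃ k, c = k + 2 := ⟨c - 2, by omega⟩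
  open MvPolynomial in
  -- extract the regularity properties we need
  have hwk := hf.toIsWeaklyRegular
  rw [List.ofFn_succ, List.ofFn_succ, Fin.succ_zero_eq_one,
    RingTheory.Sequence.isWeaklyRegular_cons_iff,
    RingTheory.Sequence.isWeaklyRegular_cons_iff] at hwk
  obtain ⟨h0r, h1r, -⟩ := hwk
  have hf0 : ∀ x : Q, f 0 * x = 0 → x = 0 := by
    intro x hx
    exact h0r (show f 0 • x = f 0 • (0 : Q) by simp [smul_eq_mul, hx])
  have hsmul_top : (f 0 • ⊤ : Submodule Q Q) = (Ideal.span {f 0} : Ideal Q) := by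
    rw [← Submodule.ideal_span_singleton_smul, Ideal.smul_eq_mul, Ideal.mul_top]
  have hf1 : ∀ x : Q, f 1 * x ∈ Ideal.span {f 0} → x ∈ Ideal.span {f 0} := by
    intro x hx
    have key : (f 1) • (Submodule.Quotient.mk x : QuotSMulTop (f 0) Q)
        = (f 1) • (Submodule.Quotient.mk (0 : Q)) := by
      rw [← Submodule.Quotient.mk_smul, ← Submodule.Quotient.mk_smul, Submodule.Quotient.eq,
        hsmul_top]
      have hsimp : f 1 • x - f 1 • (0 : Q) = f 1 * x := by simp [smul_eq_mul]
      rw [hsimp]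
      exact hx
    have h2 := h1r key
    rw [Submodule.Quotient.eq, hsmul_top] at h2
    simpa using h2
  set w : MvPolynomial (Fin (k + 2)) Q := ∑ i, C (f i) * X i with hwdef
  have hcw : constantCoeff w = 0 := by
    simp [hwdef]
  have hreg : ∀ g : MvPolynomial (Fin (k + 2)) Q, g * w = 0 → g = 0 :=
    fun g hg => aux_w_regular f hf0 g hg
  constructor
  · -- w is not a unit
    intro hu
    have h := hu.map (MvPolynomial.constantCoeff (σ := Fin (k + 2)) (R := Q))
    rw [hcw] at h
    exact not_isUnit_zero h
  · intro a b hab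
    -- coefficient extraction maps
    set ρ : Fin (k + 2) → (MvPolynomial (Fin (k + 2)) Q →+* Polynomial Q) := fun i =>
      MvPolynomial.eval₂Hom Polynomial.C (fun j => if j = i then Polynomial.X else 0) with hρ
    have hρw : ∀ i, ρ i w = Polynomial.C (f i) * Polynomial.X := by
      intro i
      rw [hwdef, map_sum]
      have key : ∀ j, ρ i (C (f j) * X j)
          = if j = i then Polynomial.C (f j) * Polynomial.X else 0 := by
        intro j
        rw [map_mul]
        have h1 : ρ i (C (f j)) = Polynomial.C (f j) := by simp [hρ]
        have h2 : ρ i (X j) = if j = i then Polynomial.X else 0 := by simp [hρ]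
        rw [h1, h2]
        split <;> simp
      rw [Finset.sum_congr rfl (fun j _ => key j),
        Finset.sum_ite_eq' Finset.univ i (fun j => Polynomial.C (f j) * Polynomial.X),
        if_pos (Finset.mem_univ i)]
    have hcc0 : ∀ (i : Fin (k + 2)) (q : MvPolynomial (Fin (k + 2)) Q),
        (ρ i q).coeff 0 = constantCoeff q := by
      intro i q
      have hcomp : (Polynomial.constantCoeff).comp (ρ i)
          = (MvPolynomial.constantCoeff (σ := Fin (k + 2)) (R := Q)) := by
        apply MvPolynomial.ringHom_ext
        · intro r; simp [hρ, Polynomial.constantCoeff_apply]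
        · intro j
          simp only [RingHom.comp_apply, hρ, MvPolynomial.eval₂Hom_X',
            MvPolynomial.constantCoeff_X]
          split <;> simp [Polynomial.constantCoeff_apply]
      have := congrArg (fun φ => φ q) hcomp
      simpa [Polynomial.constantCoeff_apply] using this
    have hcoeff1 : ∀ (P R' : Polynomial Q),
        (P * R').coeff 1 = P.coeff 0 * R'.coeff 1 + P.coeff 1 * R'.coeff 0 := by
      intro P R'
      rw [Polynomial.coeff_mul, Finset.Nat.sum_antidiagonal_eq_sum_range_succ_mk]
      simp [Finset.sum_range_succ]
    set α : Q := constantCoeff a with hα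
    set β : Q := constantCoeff b with hβ
    set A : Fin (k + 2) → Q := fun i => (ρ i a).coeff 1 with hA
    set Bc : Fin (k + 2) → Q := fun i => (ρ i b).coeff 1 with hBc
    have hαβ : α * β = 0 := by
      rw [hα, hβ, ← map_mul, ← hab, hcw]
    have hrel : ∀ i, α * Bc i + A i * β = f i := by
      intro i
      have hab' : ρ i a * ρ i b = Polynomial.C (f i) * Polynomial.X := by
        rw [← map_mul, ← hab, hρw]
      have hco := congrArg (fun P => Polynomial.coeff P 1) hab'
      simp only [hcoeff1] at hco
      rw [hcc0 i a, hcc0 i b] at hco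
      simpa [hA, hBc] using hco
    -- the idempotent-style decomposition
    have hkey : ∀ i j, f j * (α * Bc i) = f i * (α * Bc j) := by
      intro i j
      linear_combination (α * Bc j) * (hrel i) - (α * Bc i) * (hrel j)
        - (A i * Bc j - A j * Bc i) * hαβ
    have h01 : f 1 * (α * Bc 0) ∈ Ideal.span {f 0} :=
      Ideal.mem_span_singleton.mpr ⟨α * Bc 1, hkey 0 1⟩
    obtain ⟨h, hh⟩ := Ideal.mem_span_singleton.mp (hf1 _ h01)
    have heall : ∀ i, α * Bc i = f i * h := by
      intro i
      have hcan : f 0 * (α * Bc i - f i * h) = 0 := by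
        linear_combination hkey i 0 + f i * hh
      exact sub_eq_zero.mp (hf0 _ hcan)
    rcases IsLocalRing.isUnit_or_isUnit_one_sub_self h with hu | hu
    · -- f i = α * (Bc i * h⁻¹) for all i
      have hfi : ∀ i, f i = α * (Bc i * ((hu.unit⁻¹ : Qˣ) : Q)) := by
        intro i
        calc f i = f i * (h * ((hu.unit⁻¹ : Qˣ) : Q)) := by
              rw [hu.mul_val_inv, mul_one]
          _ = (α * Bc i) * ((hu.unit⁻¹ : Qˣ) : Q) := by rw [heall i]; ring
          _ = α * (Bc i * ((hu.unit⁻¹ : Qˣ) : Q)) := by ring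
      by_cases hαu : IsUnit α
      · exact Or.inl (aux_isUnit_of_dvd_w f hreg a ⟨b, by rw [← hwdef, hab]⟩ hαu)
      · exact (aux_no_small_factor (f 0) (f 1) hf0 hf1 α
          (Bc 0 * ((hu.unit⁻¹ : Qˣ) : Q)) (Bc 1 * ((hu.unit⁻¹ : Qˣ) : Q))
          hαu (hfi 0) (hfi 1)).elim
    · -- f i = β * (A i * (1-h)⁻¹) for all i
      have hgi : ∀ i, β * A i = f i * (1 - h) := by
        intro i
        linear_combination hrel i - heall i
      have hfi : ∀ i, f i = β * (A i * ((hu.unit⁻¹ : Qˣ) : Q)) := by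
        intro i
        calc f i = f i * ((1 - h) * ((hu.unit⁻¹ : Qˣ) : Q)) := by
              rw [hu.mul_val_inv, mul_one]
          _ = (β * A i) * ((hu.unit⁻¹ : Qˣ) : Q) := by rw [hgi i]; ring
          _ = β * (A i * ((hu.unit⁻¹ : Qˣ) : Q)) := by ring
      by_cases hβu : IsUnit β
      · exact Or.inr (aux_isUnit_of_dvd_w f hreg b ⟨a, by rw [← hwdef, hab, mul_comm]⟩ hβu)
      · exact (aux_no_small_factor (f 0) (f 1) hf0 hf1 β
          (A 0 * ((hu.unit⁻¹ : Qˣ) : Q)) (A 1 * ((hu.unit⁻¹ : Qˣ) : Q))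
          hβu (hfi 0) (hfi 1)).elim
end

section
/- Let (R, m, k) be a local ring and C a totally acyclic complex of finitely generated free R-modules. If C is contractible at some position n (i.e., there exist sₙ : Cₙ → C_{n+1}, s_{n-1} : C_{n-1} → Cₙ with ∂_{n+1}sₙ + s_{n-1}∂ₙ an isomorphism), then C is contractible. -/
open CategoryTheory

universe u

section Aux

variable {R : Type*} [CommRing R]

/-- Abstract splitting step: if `p ∘ q = 0`, `p` has a weak inverse `u` (`p u p = p`),
`ker p ⊆ range q` and the middle module is projective, then `q` has a weak inverse. -/
lemma step_aux {X Y Z : Type*} [AddCommGroup X] [AddCommGroup Y] [AddCommGroup Z]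
    [Module R X] [Module R Y] [Module R Z] [Module.Projective R Y]
    (p : Y →ₗ[R] Z) (q : X →ₗ[R] Y) (u : Z →ₗ[R] Y)
    (hpq : p ∘ₗ q = 0) (hu : p ∘ₗ (u ∘ₗ p) = p)
    (hker : ∀ y, p y = 0 → ∃ x, q x = y) :
    ∃ v : Y →ₗ[R] X, q ∘ₗ (v ∘ₗ q) = q := by
  have hmem : ∀ y : Y, y - u (p y) ∈ LinearMap.range q := by
    intro y
    have h1 : p (y - u (p y)) = 0 := by
      have := LinearMap.congr_fun hu y
      simp only [LinearMap.comp_apply] at this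
      simp [map_sub, this]
    obtain ⟨x, hx⟩ := hker _ h1
    exact ⟨x, hx⟩
  obtain ⟨v, hv⟩ := Module.projective_lifting_property (R := R)
    q.rangeRestrict
    (LinearMap.codRestrict (LinearMap.range q) (LinearMap.id - u ∘ₗ p) hmem)
    (LinearMap.surjective_rangeRestrict q)
  refine ⟨v, ?_⟩
  have hqv : ∀ y, q (v y) = y - u (p y) := by
    intro y
    have := LinearMap.congr_fun hv y
    have := congrArg Subtype.val this
    simpa using this
  ext x
  have h2 : p (q x) = 0 := by
    have := LinearMap.congr_fun hpq x
    simpa using this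
  simp [LinearMap.comp_apply, hqv, h2]

variable (C : ChainComplex (ModuleCat.{u} R) ℤ) {R' : Type u} [CommRing R']
variable (D : ChainComplex (ModuleCat.{u} R') ℤ)

/-- The differential of `C`, regarded as a linear map. -/
def dl (i j : ℤ) : D.X i →ₗ[R'] D.X j := (D.d i j).hom

lemma dl_comp_dl (i j k : ℤ) : dl D j k ∘ₗ dl D i j = 0 := by
  unfold dl; rw [← ModuleCat.hom_comp, D.d_comp_d]; rfl

/-- The differential `dₘ : Cₘ → C_{m-1}` admits a weak inverse. -/
def SplitAt (m : ℤ) : Prop :=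
  ∃ g : D.X (m - 1) →ₗ[R'] D.X m,
    dl D m (m - 1) ∘ₗ (g ∘ₗ dl D m (m - 1)) = dl D m (m - 1)

lemma splitAt_succ (m : ℤ) [Module.Projective R' (D.X m)]
    (hexm : ∀ x : D.X m, dl D m (m - 1) x = 0 → ∃ y, dl D (m + 1) m y = x)
    (h : SplitAt D m) : SplitAt D (m + 1) := by
  obtain ⟨g, hg⟩ := h
  rw [SplitAt, show (m : ℤ) + 1 - 1 = m by ring]
  exact step_aux (dl D m (m - 1)) (dl D (m + 1) m) g
    (dl_comp_dl D (m + 1) m (m - 1)) hg hexm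

lemma splitAt_pred (m : ℤ)
    [Module.Free R' (D.X (m - 1))] [Module.Finite R' (D.X (m - 1))]
    [Module.Free R' (D.X (m - 2))] [Module.Finite R' (D.X (m - 2))]
    (hdu : ∀ φ : Module.Dual R' (D.X (m - 1)), (dl D m (m - 1)).dualMap φ = 0 →
      ∃ ψ, (dl D (m - 1) (m - 2)).dualMap ψ = φ)
    (h : SplitAt D m) : SplitAt D (m - 1) := by
  obtain ⟨g, hg⟩ := h
  have hpq : (dl D m (m - 1)).dualMap ∘ₗ (dl D (m - 1) (m - 2)).dualMap = 0 := by
    ext φ x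
    have := LinearMap.congr_fun (dl_comp_dl D m (m - 1) (m - 2)) x
    simp only [LinearMap.comp_apply, LinearMap.zero_apply] at this ⊢
    simp [LinearMap.dualMap_apply, this]
  have hu : (dl D m (m - 1)).dualMap ∘ₗ (g.dualMap ∘ₗ (dl D m (m - 1)).dualMap)
      = (dl D m (m - 1)).dualMap := by
    ext φ y
    have := LinearMap.congr_fun hg y
    simp only [LinearMap.comp_apply] at this ⊢
    simp [LinearMap.dualMap_apply, this]
  obtain ⟨v, hv⟩ := step_aux ((dl D m (m - 1)).dualMap)
    ((dl D (m - 1) (m - 2)).dualMap) g.dualMap hpq hu hdu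
  rw [SplitAt, show (m : ℤ) - 1 - 1 = m - 2 by ring]
  refine ⟨(Module.evalEquiv R' (D.X (m - 1))).symm.toLinearMap ∘ₗ
    (v.dualMap ∘ₗ (Module.evalEquiv R' (D.X (m - 2))).toLinearMap), ?_⟩
  set w : D.X (m - 2) →ₗ[R'] D.X (m - 1) :=
    (Module.evalEquiv R' (D.X (m - 1))).symm.toLinearMap ∘ₗ
      (v.dualMap ∘ₗ (Module.evalEquiv R' (D.X (m - 2))).toLinearMap) with hw
  have key : ∀ (ψ : Module.Dual R' (D.X (m - 1))) (y : D.X (m - 2)), ψ (w y) = v ψ y := by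
    intro ψ y
    rw [hw]
    simp only [LinearMap.comp_apply, LinearEquiv.coe_coe]
    rw [Module.apply_evalEquiv_symm_apply, LinearMap.dualMap_apply]
    simp [Module.evalEquiv_apply, Module.Dual.eval_apply]
  ext x
  apply (Module.bijective_dual_eval R' (D.X (m - 2))).injective
  ext φ
  simp only [Module.Dual.eval_apply, LinearMap.comp_apply]
  have h1 := key ((dl D (m - 1) (m - 2)).dualMap φ) (dl D (m - 1) (m - 2) x)
  rw [LinearMap.dualMap_apply] at h1
  rw [h1]
  have h2 := LinearMap.congr_fun hv φ
  simp only [LinearMap.comp_apply] at h2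
  have h3 := congrFun (congrArg DFunLike.coe h2) x
  simpa [LinearMap.dualMap_apply] using h3

end Aux

/-- Let `(R, m, k)` be a Noetherian local ring and `C` a totally acyclic complex of
finitely generated free `R`-modules (both `C` and the dual complex `Hom_R(C, R)` are
exact).  If `C` is contractible at some position `n`, i.e. there exist
`sₙ : Cₙ → C_{n+1}` and `s_{n-1} : C_{n-1} → Cₙ` with `∂_{n+1}sₙ + s_{n-1}∂ₙ` an
isomorphism, then `C` is contractible. -/
theorem contractible_of_contractible_at
    {R : Type u} [CommRing R] [IsLocalRing R] [IsNoetherianRing R]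
    (C : ChainComplex (ModuleCat.{u} R) ℤ)
    (hfree : ∀ n : ℤ, Module.Free R (C.X n))
    (hfin : ∀ n : ℤ, Module.Finite R (C.X n))
    (hexact : ∀ n : ℤ, C.ExactAt n)
    (hdual : ∀ n : ℤ,
      Function.Exact (((C.d n (n - 1)).hom : _ →ₗ[R] _).dualMap)
        (((C.d (n + 1) n).hom : _ →ₗ[R] _).dualMap))
    (n : ℤ)
    (hcontr : ∃ (s : C.X n →ₗ[R] C.X (n + 1)) (t : C.X (n - 1) →ₗ[R] C.X n),
      Function.Bijective
        (((C.d (n + 1) n).hom : _ →ₗ[R] _) ∘ₗ s + t ∘ₗ ((C.d n (n - 1)).hom : _ →ₗ[R] _))) :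
    Nonempty (Homotopy (𝟙 C) 0) := by
  classical
  obtain ⟨s, t, hbij⟩ := hcontr
  -- exactness in element form
  have hex : ∀ m : ℤ, ∀ x : C.X m, dl C m (m - 1) x = 0 → ∃ y, dl C (m + 1) m y = x := by
    intro m
    have h1 : (ComplexShape.down ℤ).prev m = m + 1 :=
      (ComplexShape.down ℤ).prev_eq' (by rw [ComplexShape.down_Rel])
    have h2 : (ComplexShape.down ℤ).next m = m - 1 :=
      (ComplexShape.down ℤ).next_eq' (by rw [ComplexShape.down_Rel]; omega)
    have h3 := (C.exactAt_iff' (m + 1) m (m - 1) h1 h2).1 (hexact m)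
    rw [ShortComplex.moduleCat_exact_iff] at h3
    intro x hx
    exact h3 x hx
  -- dual exactness in element form
  have hdu : ∀ m : ℤ, ∀ φ : Module.Dual R (C.X (m - 1)),
      (dl C m (m - 1)).dualMap φ = 0 → ∃ ψ, (dl C (m - 1) (m - 2)).dualMap ψ = φ := by
    intro m φ hφ
    have h := hdual (m - 1)
    rw [show (m : ℤ) - 1 - 1 = m - 2 by ring, show (m : ℤ) - 1 + 1 = m by ring] at h
    obtain ⟨ψ, hψ⟩ := (h φ).1 hφ
    exact ⟨ψ, hψ⟩
  -- the base isomorphism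
  set e : C.X n →ₗ[R] C.X n :=
    ((C.d (n + 1) n).hom : _ →ₗ[R] _) ∘ₗ s + t ∘ₗ ((C.d n (n - 1)).hom : _ →ₗ[R] _) with he
  have hbij' : Function.Bijective e := hbij
  have he_apply : ∀ x : C.X n, e x = dl C (n + 1) n (s x) + t (dl C n (n - 1) x) := by
    intro x; rw [he]; rfl
  have heZ : ∀ x : C.X n, dl C n (n - 1) x = 0 → dl C n (n - 1) (e x) = 0 := by
    intro x hx
    rw [he_apply, map_add, hx, map_zero, map_zero, add_zero]
    exact LinearMap.congr_fun (dl_comp_dl C (n + 1) n (n - 1)) (s x)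
  -- the inverse preserves the kernel of the differential (Vasconcelos/Orzech)
  haveI := hfin n
  set Z : Submodule R (C.X n) := LinearMap.ker (dl C n (n - 1)) with hZdef
  have hZle : Z ≤ Z.comap e := by
    intro x hx
    exact Submodule.mem_comap.mpr (LinearMap.mem_ker.mpr (heZ x (LinearMap.mem_ker.mp hx)))
  set eQ : (C.X n ⧸ Z) →ₗ[R] (C.X n ⧸ Z) := Submodule.mapQ Z Z e hZle with heQ
  have hsurj : Function.Surjective eQ := by
    intro q
    obtain ⟨x, rfl⟩ := Submodule.mkQ_surjective Z q
    obtain ⟨y, hy⟩ := hbij'.2 x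
    refine ⟨Z.mkQ y, ?_⟩
    show Z.mapQ Z e hZle (Z.mkQ y) = Z.mkQ x
    rw [Submodule.mkQ_apply, Submodule.mapQ_apply, hy, ← Submodule.mkQ_apply]
  have hinj : Function.Injective eQ :=
    OrzechProperty.injective_of_surjective_endomorphism eQ hsurj
  have hEker : ∀ x : C.X n, dl C n (n - 1) (e x) = 0 → dl C n (n - 1) x = 0 := by
    intro x hx
    have h0 : eQ (Z.mkQ x) = 0 := by
      show Z.mapQ Z e hZle (Z.mkQ x) = 0
      rw [Submodule.mkQ_apply, Submodule.mapQ_apply, Submodule.Quotient.mk_eq_zero]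
      exact LinearMap.mem_ker.mpr hx
    have h1 : Z.mkQ x = 0 := hinj (by simpa using h0)
    rw [Submodule.mkQ_apply, Submodule.Quotient.mk_eq_zero] at h1
    exact LinearMap.mem_ker.mp h1
  set E : C.X n ≃ₗ[R] C.X n := LinearEquiv.ofBijective e hbij' with hE
  have hEs : ∀ x, e (E.symm x) = x := fun x => E.apply_symm_apply x
  have hEsymm_e : ∀ x, E.symm (e x) = x := fun x => E.symm_apply_apply x
  have hsymmZ : ∀ x : C.X n, dl C n (n - 1) x = 0 → dl C n (n - 1) (E.symm x) = 0 := by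
    intro x hx
    exact hEker _ (by rw [hEs]; exact hx)
  -- splitting at position n
  have hPn : SplitAt C n := by
    refine ⟨E.symm.toLinearMap ∘ₗ t, ?_⟩
    ext x
    simp only [LinearMap.comp_apply, LinearEquiv.coe_coe]
    have h1 : t (dl C n (n - 1) x) = e x - dl C (n + 1) n (s x) := by
      rw [he_apply]; abel
    rw [h1, map_sub, hEsymm_e, map_sub]
    have h2 : dl C n (n - 1) (E.symm (dl C (n + 1) n (s x))) = 0 :=
      hsymmZ _ (LinearMap.congr_fun (dl_comp_dl C (n + 1) n (n - 1)) (s x))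
    rw [h2, sub_zero]
  -- splitting at position n + 1
  have hPn1 : SplitAt C (n + 1) := by
    rw [SplitAt, show (n : ℤ) + 1 - 1 = n by ring]
    refine ⟨s ∘ₗ E.symm.toLinearMap, ?_⟩
    ext y
    simp only [LinearMap.comp_apply, LinearEquiv.coe_coe]
    have hz : dl C n (n - 1) (E.symm (dl C (n + 1) n y)) = 0 :=
      hsymmZ _ (LinearMap.congr_fun (dl_comp_dl C (n + 1) n (n - 1)) y)
    have h1 : dl C (n + 1) n (s (E.symm (dl C (n + 1) n y)))
        = e (E.symm (dl C (n + 1) n y)) - t (dl C n (n - 1) (E.symm (dl C (n + 1) n y))) := by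
      rw [he_apply]; abel
    rw [h1, hz, map_zero, sub_zero, hEs]
  -- propagate the splitting everywhere
  have hPup : ∀ m : ℤ, SplitAt C m → SplitAt C (m + 1) := by
    intro m hm
    haveI := hfree m
    exact splitAt_succ C m (hex m) hm
  have hPdown : ∀ m : ℤ, SplitAt C m → SplitAt C (m - 1) := by
    intro m hm
    haveI := hfree (m - 1); haveI := hfin (m - 1)
    haveI := hfree (m - 2); haveI := hfin (m - 2)
    exact splitAt_pred C m (hdu m) hm
  have hP : ∀ m : ℤ, SplitAt C m := by
    intro m
    have key : ∀ k : ℤ, SplitAt C (n + k) := by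
      intro k
      induction k using Int.induction_on with
      | zero => simpa using hPn
      | succ i ih =>
        have := hPup (n + (i : ℤ)) ih
        rwa [show (n : ℤ) + (i : ℤ) + 1 = n + ((i : ℤ) + 1) by ring] at this
      | pred i ih =>
        have := hPdown (n + (-(i : ℤ))) ih
        rwa [show (n : ℤ) + (-(i : ℤ)) - 1 = n + (-(i : ℤ) - 1) by ring] at this
    have := key (m - n)
    rwa [show (n : ℤ) + (m - n) = m by ring] at this
  -- reindex the weak inverses
  have hGG : ∀ i j : ℤ, ∃ G : C.X i →ₗ[R] C.X j,
      j = i + 1 → dl C j i ∘ₗ (G ∘ₗ dl C j i) = dl C j i := by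
    intro i j
    by_cases h : j = i + 1
    · have := hP j
      rw [SplitAt, show j - 1 = i by omega] at this
      obtain ⟨G, hG⟩ := this
      exact ⟨G, fun _ => hG⟩
    · exact ⟨0, fun h' => absurd h' h⟩
  choose G hG using hGG
  -- assemble the homotopy
  set homf : ∀ i j : ℤ, (C.X i ⟶ C.X j) := fun i j =>
    if j = i + 1 then
      ModuleCat.ofHom (G i j ∘ₗ (LinearMap.id - G (i - 1) i ∘ₗ dl C i (i - 1)) : C.X i →ₗ[R] C.X j)
    else 0 with hhomf
  refine ⟨{ hom := homf, zero := ?_, comm := ?_ }⟩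
  · intro i j h
    simp only [hhomf]
    rw [if_neg]
    intro h'
    exact h (by rw [ComplexShape.down_Rel, h'])
  · intro m
    have hrel1 : (ComplexShape.down ℤ).Rel m (m - 1) := by
      rw [ComplexShape.down_Rel]; omega
    have hrel2 : (ComplexShape.down ℤ).Rel (m + 1) m := by
      rw [ComplexShape.down_Rel]
    rw [dNext_eq homf hrel1, prevD_eq homf hrel2]
    simp only [hhomf]
    simp only [if_true]
    rw [if_pos (show m = m - 1 + 1 by omega)]
    apply ModuleCat.hom_ext
    show (LinearMap.id : C.X m →ₗ[R] C.X m)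
        = (G (m - 1) m ∘ₗ (LinearMap.id - G (m - 1 - 1) (m - 1) ∘ₗ dl C (m - 1) (m - 1 - 1)))
            ∘ₗ dl C m (m - 1)
          + dl C (m + 1) m ∘ₗ (G m (m + 1) ∘ₗ (LinearMap.id - G (m - 1) m ∘ₗ dl C m (m - 1)))
          + 0
    refine LinearMap.ext fun x => ?_
    have e1 : dl C (m - 1) (m - 1 - 1) (dl C m (m - 1) x) = 0 :=
      LinearMap.congr_fun (dl_comp_dl C m (m - 1) (m - 1 - 1)) x
    have hgm := LinearMap.congr_fun (hG (m - 1) m (by ring)) x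
    simp only [LinearMap.comp_apply] at hgm
    have hz : dl C m (m - 1) (x - G (m - 1) m (dl C m (m - 1) x)) = 0 := by
      rw [map_sub, hgm, sub_self]
    obtain ⟨y, hy⟩ := hex m _ hz
    have h2 : dl C (m + 1) m (G m (m + 1) (x - G (m - 1) m (dl C m (m - 1) x)))
        = x - G (m - 1) m (dl C m (m - 1) x) := by
      rw [← hy]
      have := LinearMap.congr_fun (hG m (m + 1) rfl) y
      simpa [LinearMap.comp_apply] using this
    show x = G (m - 1) m (dl C m (m - 1) x
        - G (m - 1 - 1) (m - 1) (dl C (m - 1) (m - 1 - 1) (dl C m (m - 1) x)))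
      + dl C (m + 1) m (G m (m + 1) (x - G (m - 1) m (dl C m (m - 1) x))) + 0
    rw [e1, map_zero, sub_zero, h2]
    abel
end

section
/- Let R be an integral domain, C an exact complex of finitely generated free R-modules, p ∈ R, and C^p the mapping cone of the multiplication-by-p chain endomorphism μ_p : C → C. Then for all n, rank ∂^{C^p}_n = rank C_{n-1}, where rank of a map is computed over the fraction field. -/
open CategoryTheory

universe u

noncomputable local instance : DecidableRel (ComplexShape.down ℤ).Rel := fun _ _ => by
  dsimp [ComplexShape.down]; infer_instance

local instance {R : Type u} [CommRing R] {C D : ChainComplex (ModuleCat.{u} R) ℤ}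
    (f : C ⟶ D) : HomologicalComplex.HasHomotopyCofiber f :=
  ⟨fun _ _ _ => inferInstance⟩

/-- For an integral domain `R` with fraction field `K`, the rank of an `R`-linear map
`f`: the `K`-dimension of the image of `K ⊗_R f`. -/
noncomputable def franK {R : Type u} [CommRing R] [IsDomain R]
    {M N : Type u} [AddCommGroup M] [Module R M] [AddCommGroup N] [Module R N]
    (f : M →ₗ[R] N) : ℕ :=
  Module.finrank (FractionRing R)
    (LinearMap.range (LinearMap.baseChange (FractionRing R) f))

section helpers

open TensorProduct

variable {R : Type u} [CommRing R] [IsDomain R]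

lemma baseChange_equiv_surj {M N : Type u} [AddCommGroup M] [Module R M]
    [AddCommGroup N] [Module R N] (e : M ≃ₗ[R] N) :
    Function.Surjective (LinearMap.baseChange (FractionRing R) e.toLinearMap) := by
  have h : (LinearMap.baseChange (FractionRing R) e.toLinearMap) ∘ₗ
      (LinearMap.baseChange (FractionRing R) e.symm.toLinearMap) = LinearMap.id := by
    rw [← LinearMap.baseChange_comp]
    simp
  intro y
  exact ⟨_, congrFun (congrArg DFunLike.coe h) y⟩

lemma baseChange_equiv_inj {M N : Type u} [AddCommGroup M] [Module R M]
    [AddCommGroup N] [Module R N] (e : M ≃ₗ[R] N) :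
    Function.Injective (LinearMap.baseChange (FractionRing R) e.toLinearMap) := by
  have h : (LinearMap.baseChange (FractionRing R) e.symm.toLinearMap) ∘ₗ
      (LinearMap.baseChange (FractionRing R) e.toLinearMap) = LinearMap.id := by
    rw [← LinearMap.baseChange_comp]
    simp
  intro x y hxy
  have := congrArg (LinearMap.baseChange (FractionRing R) e.symm.toLinearMap) hxy
  simpa using
    (congrFun (congrArg DFunLike.coe h) x).symm.trans
      (this.trans (congrFun (congrArg DFunLike.coe h) y))

lemma franK_congr {M N M' N' : Type u}
    [AddCommGroup M] [Module R M] [AddCommGroup N] [Module R N]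
    [AddCommGroup M'] [Module R M'] [AddCommGroup N'] [Module R N']
    (f : M →ₗ[R] N) (e : M' ≃ₗ[R] M) (e' : N ≃ₗ[R] N')
    (g : M' →ₗ[R] N') (hg : g = e'.toLinearMap ∘ₗ f ∘ₗ e.toLinearMap) :
    franK g = franK f := by
  subst hg
  unfold franK
  rw [LinearMap.baseChange_comp, LinearMap.baseChange_comp, LinearMap.range_comp,
    LinearMap.range_comp, LinearMap.range_eq_top.2 (baseChange_equiv_surj e),
    Submodule.map_top]
  have hco : ((LinearEquiv.baseChange R (FractionRing R) N N' e').toLinearMap : _ →ₗ[FractionRing R] _) =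
      LinearMap.baseChange (FractionRing R) e'.toLinearMap := by
    ext x
    simp [LinearEquiv.baseChange]
  rw [← hco]
  exact LinearEquiv.finrank_map_eq _ _

end helpers

section field
variable {K V W V0 V1 V2 : Type*} [Field K]
  [AddCommGroup V] [Module K V] [AddCommGroup W] [Module K W]
  [AddCommGroup V0] [Module K V0] [AddCommGroup V1] [Module K V1]
  [AddCommGroup V2] [Module K V2]

/-- The product of two submodules is equivalent to the product of the subtypes. -/
def submoduleProdEquiv (p : Submodule K V) (q : Submodule K W) :
    (p.prod q) ≃ₗ[K] p × q where
  toFun x := (⟨x.1.1, x.2.1⟩, ⟨x.1.2, x.2.2⟩)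
  invFun y := ⟨(y.1.1, y.2.1), ⟨y.1.2, y.2.2⟩⟩
  map_add' _ _ := rfl
  map_smul' _ _ := rfl
  left_inv _ := rfl
  right_inv _ := rfl

lemma block_rank [FiniteDimensional K V0] [FiniteDimensional K V1]
    (δ1 : V0 →ₗ[K] V1) (δ2 : V1 →ₗ[K] V2)
    (hex : LinearMap.range δ1 = LinearMap.ker δ2) (q : K) :
    Module.finrank K (LinearMap.range
      (LinearMap.prod ((-δ2) ∘ₗ LinearMap.fst K V1 V0)
        (q • LinearMap.fst K V1 V0 + δ1 ∘ₗ LinearMap.snd K V1 V0))) =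
      Module.finrank K V1 := by
  set T := LinearMap.prod ((-δ2) ∘ₗ LinearMap.fst K V1 V0)
      (q • LinearMap.fst K V1 V0 + δ1 ∘ₗ LinearMap.snd K V1 V0) with hT
  have hTapp : ∀ a b, T (a, b) = (-δ2 a, q • a + δ1 b) := fun a b => rfl
  have hker : Module.finrank K (LinearMap.ker T) = Module.finrank K V0 := by
    by_cases hq : q = 0
    · have hkT : LinearMap.ker T = (LinearMap.ker δ2).prod (LinearMap.ker δ1) := by
        ext ⟨a, b⟩
        simp [LinearMap.mem_ker, hq, hTapp, Prod.ext_iff, Submodule.mem_prod,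
          neg_eq_zero]
      have h1 := LinearMap.finrank_range_add_finrank_ker δ1
      rw [hex] at h1
      rw [hkT, LinearEquiv.finrank_eq (submoduleProdEquiv _ _), Module.finrank_prod]
      omega
    · have g : V0 →ₗ[K] V1 × V0 := 0
      set g := LinearMap.prod ((-(q⁻¹)) • δ1) (LinearMap.id (R := K) (M := V0)) with hg
      have hginj : Function.Injective g := by
        intro x y hxy
        simpa [hg] using congrArg Prod.snd hxy
      have hrg : LinearMap.range g = LinearMap.ker T := by
        ext ⟨a, b⟩
        simp only [hg, LinearMap.mem_range, LinearMap.mem_ker, LinearMap.prod_apply,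
          Function.prod, LinearMap.smul_apply, LinearMap.neg_apply, LinearMap.id_coe, id_eq,
          Prod.mk.injEq, hTapp, Prod.ext_iff, Prod.fst_zero, Prod.snd_zero]
        constructor
        · rintro ⟨y, ha, rfl⟩
          have hy : δ2 (δ1 y) = 0 :=
            LinearMap.mem_ker.1 (hex ▸ LinearMap.mem_range_self δ1 y)
          subst ha
          refine ⟨by simp [hy], ?_⟩
          rw [smul_smul, mul_neg, mul_inv_cancel₀ hq]
          simp
        · rintro ⟨-, hab⟩
          refine ⟨b, ?_, rfl⟩
          have h3 : q • a = -δ1 b := by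
            rw [← eq_neg_iff_add_eq_zero] at hab
            exact hab
          have h4 := congrArg (fun v => q⁻¹ • v) h3
          simp only [smul_smul, inv_mul_cancel₀ hq, one_smul] at h4
          rw [h4, smul_neg, neg_smul]
      rw [← hrg]
      exact LinearMap.finrank_range_of_inj hginj
  have h2 := LinearMap.finrank_range_add_finrank_ker T
  rw [hker, Module.finrank_prod] at h2
  omega

end field

open TensorProduct in
/-- Base change commutes with binary products. -/
noncomputable def prodBaseChange {R K M N : Type*} [CommRing R] [CommRing K] [Algebra R K]
    [AddCommGroup M] [Module R M] [AddCommGroup N] [Module R N] :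
    K ⊗[R] (M × N) ≃ₗ[K] (K ⊗[R] M) × (K ⊗[R] N) :=
  LinearEquiv.ofLinear
    (LinearMap.prod ((LinearMap.fst R M N).baseChange K) ((LinearMap.snd R M N).baseChange K))
    (LinearMap.coprod ((LinearMap.inl R M N).baseChange K) ((LinearMap.inr R M N).baseChange K))
    (by ext <;> simp)
    (by ext <;> simp)

@[simp] lemma prodBaseChange_tmul {R K M N : Type*} [CommRing R] [CommRing K] [Algebra R K]
    [AddCommGroup M] [Module R M] [AddCommGroup N] [Module R N] (k : K) (x : M × N) :
    (prodBaseChange (K := K) (k ⊗ₜ[R] x)) = (k ⊗ₜ[R] x.1, k ⊗ₜ[R] x.2) := by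
  simp [prodBaseChange]

lemma finrank_range_congr {K M N M' N' : Type*} [Field K]
    [AddCommGroup M] [Module K M] [AddCommGroup N] [Module K N]
    [AddCommGroup M'] [Module K M'] [AddCommGroup N'] [Module K N']
    (f : M →ₗ[K] N) (g : M' →ₗ[K] N') (e : M ≃ₗ[K] M') (e' : N ≃ₗ[K] N')
    (h : ∀ x, e' (f x) = g (e x)) :
    Module.finrank K (LinearMap.range f) = Module.finrank K (LinearMap.range g) := by
  have hg : g = e'.toLinearMap ∘ₗ f ∘ₗ e.symm.toLinearMap := by
    ext y
    simpa using (h (e.symm y)).symm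
  rw [hg, LinearMap.range_comp, LinearMap.range_comp,
    LinearEquiv.range, Submodule.map_top]
  exact (LinearEquiv.finrank_map_eq e' _).symm

lemma franK_congr' {R : Type u} [CommRing R] [IsDomain R] {M N M' N' : Type u}
    [AddCommGroup M] [Module R M] [AddCommGroup N] [Module R N]
    [AddCommGroup M'] [Module R M'] [AddCommGroup N'] [Module R N']
    (f : M →ₗ[R] N) (g : M' →ₗ[R] N') (e : M ≃ₗ[R] M') (e' : N ≃ₗ[R] N')
    (h : ∀ x, e' (f x) = g (e x)) : franK f = franK g :=
  (franK_congr f e.symm e' g (by ext y; simpa using (h (e.symm y)).symm)).symm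

set_option maxHeartbeats 1000000 in
open HomologicalComplex TensorProduct CategoryTheory.Limits in
/-- Let `R` be an integral domain, `C` an exact complex of finitely generated free
`R`-modules, `p ∈ R`, and `C^p` the mapping cone of the multiplication-by-`p` chain
endomorphism `μ_p : C → C`.  Then for all `n`, `rank ∂^{C^p}ₙ = rank C_{n-1}`, the
rank of a map being computed over the fraction field. -/
theorem rank_cone_differential
    {R : Type u} [CommRing R] [IsDomain R]
    (C : ChainComplex (ModuleCat.{u} R) ℤ)
    (hfree : ∀ n : ℤ, Module.Free R (C.X n))
    (hfin : ∀ n : ℤ, Module.Finite R (C.X n))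
    (hexact : ∀ n : ℤ, C.ExactAt n)
    (p : R) :
    ∀ n : ℤ,
      franK (((HomologicalComplex.homotopyCofiber (p • 𝟙 C)).d n (n - 1)).hom : _ →ₗ[R] _) =
        Module.finrank R (C.X (n - 1)) := by
  intro n
  obtain ⟨m, hm⟩ : ∃ m, m = n - 1 := ⟨_, rfl⟩
  rw [← hm]
  obtain ⟨k, hk⟩ : ∃ k, k = m - 1 := ⟨_, rfl⟩
  have hn1 : (ComplexShape.down ℤ).Rel n m := by simp [ComplexShape.down, hm]
  have hn2 : (ComplexShape.down ℤ).Rel m k := by simp [ComplexShape.down, hk]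
  set φ := (p • 𝟙 C) with hφ
  haveI := hfin n; haveI := hfin m; haveI := hfin k
  haveI := hfree n; haveI := hfree m; haveI := hfree k
  set d1 : C.X n →ₗ[R] C.X m := ((C.d n m).hom : C.X n →ₗ[R] C.X m) with hd1
  set d2 : C.X m →ₗ[R] C.X k := ((C.d m k).hom : C.X m →ₗ[R] C.X k) with hd2
  -- the identification of the cone in degrees n and m with products
  let iso1 := homotopyCofiber.XIsoBiprod φ n m hn1 ≪≫ ModuleCat.biprodIsoProd (C.X m) (C.X n)
  let iso2 := homotopyCofiber.XIsoBiprod φ m k hn2 ≪≫ ModuleCat.biprodIsoProd (C.X k) (C.X m)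
  let e1 := iso1.toLinearEquiv
  let e2 := iso2.toLinearEquiv
  have Hfst1 : ∀ x, (e1 x).1 = homotopyCofiber.fstX φ n m hn1 x := by
    intro x
    have h := ModuleCat.biprodIsoProd_inv_comp_fst_apply (C.X m) (C.X n) (iso1.hom x)
    have h2 : ((C.X m).biprodIsoProd (C.X n)).inv (iso1.hom x) =
        (homotopyCofiber.XIsoBiprod φ n m hn1).hom x :=
      Iso.hom_inv_id_apply ((C.X m).biprodIsoProd (C.X n)) _
    calc (e1 x).1 = LinearMap.fst R (C.X m) (C.X n) (iso1.hom x) := rfl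
      _ = (biprod.fst : C.X m ⊞ C.X n ⟶ C.X m) (((C.X m).biprodIsoProd (C.X n)).inv (iso1.hom x)) := h.symm
      _ = (biprod.fst : C.X m ⊞ C.X n ⟶ C.X m) ((homotopyCofiber.XIsoBiprod φ n m hn1).hom x) := by rw [h2]
      _ = homotopyCofiber.fstX φ n m hn1 x := rfl
  have Hsnd1 : ∀ x, (e1 x).2 = homotopyCofiber.sndX φ n x := by
    intro x
    have h := ModuleCat.biprodIsoProd_inv_comp_snd_apply (C.X m) (C.X n) (iso1.hom x)
    have h2 : ((C.X m).biprodIsoProd (C.X n)).inv (iso1.hom x) =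
        (homotopyCofiber.XIsoBiprod φ n m hn1).hom x :=
      Iso.hom_inv_id_apply ((C.X m).biprodIsoProd (C.X n)) _
    calc (e1 x).2 = LinearMap.snd R (C.X m) (C.X n) (iso1.hom x) := rfl
      _ = (biprod.snd : C.X m ⊞ C.X n ⟶ C.X n) (((C.X m).biprodIsoProd (C.X n)).inv (iso1.hom x)) := h.symm
      _ = (biprod.snd : C.X m ⊞ C.X n ⟶ C.X n) ((homotopyCofiber.XIsoBiprod φ n m hn1).hom x) := by rw [h2]
      _ = homotopyCofiber.sndX φ n x := by
          have Hs : homotopyCofiber.sndX φ n =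
              (homotopyCofiber.XIsoBiprod φ n m hn1).hom ≫ biprod.snd := by
            obtain rfl := (ComplexShape.down ℤ).next_eq' hn1
            exact dif_pos hn1
          rw [Hs]
          rfl
  have Hfst2 : ∀ x, (e2 x).1 = homotopyCofiber.fstX φ m k hn2 x := by
    intro x
    have h := ModuleCat.biprodIsoProd_inv_comp_fst_apply (C.X k) (C.X m) (iso2.hom x)
    have h2 : ((C.X k).biprodIsoProd (C.X m)).inv (iso2.hom x) =
        (homotopyCofiber.XIsoBiprod φ m k hn2).hom x :=
      Iso.hom_inv_id_apply ((C.X k).biprodIsoProd (C.X m)) _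
    calc (e2 x).1 = LinearMap.fst R (C.X k) (C.X m) (iso2.hom x) := rfl
      _ = (biprod.fst : C.X k ⊞ C.X m ⟶ C.X k) (((C.X k).biprodIsoProd (C.X m)).inv (iso2.hom x)) := h.symm
      _ = (biprod.fst : C.X k ⊞ C.X m ⟶ C.X k) ((homotopyCofiber.XIsoBiprod φ m k hn2).hom x) := by rw [h2]
      _ = homotopyCofiber.fstX φ m k hn2 x := rfl
  have Hsnd2 : ∀ x, (e2 x).2 = homotopyCofiber.sndX φ m x := by
    intro x
    have h := ModuleCat.biprodIsoProd_inv_comp_snd_apply (C.X k) (C.X m) (iso2.hom x)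
    have h2 : ((C.X k).biprodIsoProd (C.X m)).inv (iso2.hom x) =
        (homotopyCofiber.XIsoBiprod φ m k hn2).hom x :=
      Iso.hom_inv_id_apply ((C.X k).biprodIsoProd (C.X m)) _
    calc (e2 x).2 = LinearMap.snd R (C.X k) (C.X m) (iso2.hom x) := rfl
      _ = (biprod.snd : C.X k ⊞ C.X m ⟶ C.X m) (((C.X k).biprodIsoProd (C.X m)).inv (iso2.hom x)) := h.symm
      _ = (biprod.snd : C.X k ⊞ C.X m ⟶ C.X m) ((homotopyCofiber.XIsoBiprod φ m k hn2).hom x) := by rw [h2]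
      _ = homotopyCofiber.sndX φ m x := by
          have Hs : homotopyCofiber.sndX φ m =
              (homotopyCofiber.XIsoBiprod φ m k hn2).hom ≫ biprod.snd := by
            obtain rfl := (ComplexShape.down ℤ).next_eq' hn2
            exact dif_pos hn2
          rw [Hs]
          rfl
  -- the explicit block map
  set E : (C.X m × C.X n) →ₗ[R] (C.X k × C.X m) :=
    LinearMap.prod ((-d2) ∘ₗ LinearMap.fst R (C.X m) (C.X n))
      (p • LinearMap.fst R (C.X m) (C.X n) + d1 ∘ₗ LinearMap.snd R (C.X m) (C.X n)) with hE
  have hEapp : ∀ y : C.X m × C.X n, E y = (-(d2 y.1), p • y.1 + d1 y.2) := fun y => rfl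
  have hmain : ∀ x, e2 ((((homotopyCofiber φ).d n m).hom : _ →ₗ[R] _) x) = E (e1 x) := by
    intro x
    have h1 := DFunLike.congr_fun (congrArg ModuleCat.Hom.hom (homotopyCofiber.d_fstX φ n m k hn1 hn2)) x
    have h2 := DFunLike.congr_fun (congrArg ModuleCat.Hom.hom (homotopyCofiber.d_sndX φ n m hn1)) x
    refine Prod.ext ?_ ?_
    · rw [Hfst2, hEapp, Hfst1]
      simpa using h1
    · rw [Hsnd2, hEapp, Hfst1, Hsnd1]
      simpa [hφ] using h2
  rw [franK_congr' _ E e1 e2 hmain]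
  -- now base change to the fraction field
  unfold franK
  set δ1 := LinearMap.baseChange (FractionRing R) d1 with hδ1
  set δ2 := LinearMap.baseChange (FractionRing R) d2 with hδ2
  have hex : LinearMap.range δ1 = LinearMap.ker δ2 := by
    have hsc : Function.Exact d1 d2 := by
      have he := hexact m
      rw [HomologicalComplex.exactAt_iff' C n m k ((ComplexShape.down ℤ).prev_eq' hn1)
        ((ComplexShape.down ℤ).next_eq' hn2)] at he
      rw [LinearMap.exact_iff]
      exact ((ShortComplex.moduleCat_exact_iff_range_eq_ker _).1 he).symm
    have hbc : Function.Exact δ1 δ2 := by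
      rw [hδ1, hδ2]
      have := Module.Flat.lTensor_exact (R := R) (FractionRing R) hsc
      rwa [show (LinearMap.lTensor (FractionRing R) d1 : _ →ₗ[R] _) = ((δ1 : _ →ₗ[(FractionRing R)] _).restrictScalars R) from rfl,
        show (LinearMap.lTensor (FractionRing R) d2 : _ →ₗ[R] _) = ((δ2 : _ →ₗ[(FractionRing R)] _).restrictScalars R) from rfl] at this
    exact (LinearMap.exact_iff.1 hbc).symm
  have hT : ∀ x, prodBaseChange (K := FractionRing R) (LinearMap.baseChange (FractionRing R) E x) =
      (LinearMap.prod ((-δ2) ∘ₗ LinearMap.fst (FractionRing R) _ _)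
        ((algebraMap R (FractionRing R) p) • LinearMap.fst (FractionRing R) _ _ + δ1 ∘ₗ LinearMap.snd (FractionRing R) _ _))
        (prodBaseChange (K := FractionRing R) x) := by
    intro x
    induction x using TensorProduct.induction_on with
    | zero => simp only [map_zero]
    | tmul c y =>
      obtain ⟨a, b⟩ := y
      simp only [LinearMap.baseChange_tmul, hEapp, prodBaseChange_tmul, LinearMap.prod_apply,
        Function.prod, LinearMap.coe_comp, Function.comp_apply, LinearMap.neg_apply,
        LinearMap.add_apply, LinearMap.smul_apply, LinearMap.fst_apply, LinearMap.snd_apply,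
        tmul_add, tmul_smul, tmul_neg, algebraMap_smul, hδ1, hδ2]
    | add x y hx hy => simp only [map_add, hx, hy, Prod.fst_add, Prod.snd_add]
  rw [finrank_range_congr _ _ (prodBaseChange (K := FractionRing R)) (prodBaseChange (K := FractionRing R)) hT]
  rw [block_rank δ1 δ2 hex (algebraMap R (FractionRing R) p)]
  exact Module.finrank_baseChange
end

section
/- Let Q be a regular local ring with maximal ideal n, f₁,…,f_c a regular sequence in Q (c ≥ 2), R = Q[x₁,…,x_c]/(f₁x₁+⋯+f_cx_c) the generic hypersurface, and a₁,…,a_c ∈ Q with at least one aᵢ a unit. Then x₁−a₁,…,x_c−a_c is a regular sequence in R, and R/(x₁−a₁,…,x_c−a_c) ≅ Q/(a₁f₁+⋯+a_cf_c). -/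
set_option synthInstance.maxHeartbeats 1000000
set_option maxHeartbeats 1000000
open IsLocalRing MvPolynomial

section QFacts

variable {Q : Type*} [CommRing Q]

lemma aux_unit_isSMulRegular {M : Type*} [AddCommMonoid M] [Module Q M] {r : Q}
    (h : IsUnit r) : IsSMulRegular M r := by
  obtain ⟨u, rfl⟩ := h
  intro x y hxy
  simpa [smul_smul] using congrArg (fun z => (↑u⁻¹ : Q) • z) hxy

lemma aux_mem_maximalIdeal_of_isRegular [IsLocalRing Q] {l : List Q}
    (h : RingTheory.Sequence.IsRegular Q l) {r : Q} (hr : r ∈ l) :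
    r ∈ maximalIdeal Q := by
  by_contra hu
  rw [mem_maximalIdeal, mem_nonunits_iff, not_not] at hu
  refine h.top_ne_smul ?_
  have : Ideal.ofList l = ⊤ := Ideal.eq_top_of_isUnit_mem _ (Ideal.subset_span hr) hu
  rw [this, Ideal.smul_eq_mul, Ideal.top_mul]

lemma aux_isSMulRegular_last [IsLocalRing Q] [IsNoetherianRing Q] {n : ℕ}
    (f : Fin (n + 1) → Q) (h : RingTheory.Sequence.IsRegular Q (List.ofFn f)) :
    IsSMulRegular Q (f (Fin.last n)) := by
  have hperm : (List.ofFn f).Perm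
      (f (Fin.last n) :: List.ofFn fun i : Fin n => f i.castSucc) := by
    rw [List.ofFn_succ', List.concat_eq_append]
    exact List.perm_append_singleton _ _
  have h2 := IsLocalRing.isRegular_of_perm h hperm
  exact ((RingTheory.Sequence.isRegular_cons_iff _ _ _).mp h2).1

open RingTheory.Sequence in
lemma aux_isSMulRegular_sum [IsLocalRing Q] [IsNoetherianRing Q] {c : ℕ}
    (f a : Fin c → Q) (h : IsRegular Q (List.ofFn f)) {j : Fin c}
    (hj : IsUnit (a j)) : IsSMulRegular Q (∑ i, a i * f i) := by
  classical
  set l := List.ofFn f with hl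
  set t := l.eraseIdx j with ht
  have hjl : (j : ℕ) < l.length := by simp [hl]
  have hmemt : ∀ i : Fin c, i ≠ j → f i ∈ t := by
    intro i hij
    rw [ht, List.mem_eraseIdx_iff_getElem]
    exact ⟨i, by simp [hl], by simpa using fun e => hij (Fin.ext e), by simp [hl]⟩
  have hperm1 : l.Perm (f j :: t) := by
    have h1 := List.perm_cons_erase (l.getElem_mem hjl)
    have h2 := List.erase_getElem hjl (l := l)
    have : l[(j : ℕ)] = f j := by simp [hl]
    rw [this] at h1 h2
    exact h1.trans (List.Perm.cons _ h2)
  have h2 : IsRegular Q (t ++ [f j]) :=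
    IsLocalRing.isRegular_of_perm h
      (hperm1.trans (List.perm_append_singleton (f j) t).symm)
  have hw := h2.toIsWeaklyRegular
  rw [isWeaklyRegular_append_iff] at hw
  obtain ⟨hwt, hwx⟩ := hw
  have hx : IsSMulRegular (Q ⧸ (Ideal.ofList t • ⊤ : Submodule Q Q)) (f j) :=
    (isWeaklyRegular_singleton_iff _ _).mp hwx
  have hax : IsSMulRegular (Q ⧸ (Ideal.ofList t • ⊤ : Submodule Q Q)) (a j * f j) :=
    (aux_unit_isSMulRegular hj).mul hx
  -- F differs from a j * f j by an element of ofList t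
  have hdiff : (∑ i, a i * f i) - a j * f j ∈ Ideal.ofList t := by
    have hsum : (∑ i, a i * f i) = a j * f j + ∑ i ∈ Finset.univ.erase j, a i * f i :=
      (Finset.add_sum_erase _ _ (Finset.mem_univ j)).symm
    rw [hsum, add_sub_cancel_left]
    refine Ideal.sum_mem _ fun i hi => ?_
    exact Ideal.mul_mem_left _ _ (Ideal.subset_span (hmemt i (Finset.mem_erase.mp hi).1))
  have hsmul_eq : ∀ x : Q ⧸ (Ideal.ofList t • ⊤ : Submodule Q Q),
      (∑ i, a i * f i) • x = (a j * f j) • x := by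
    intro x
    obtain ⟨y, rfl⟩ := Submodule.Quotient.mk_surjective _ x
    rw [← Submodule.Quotient.mk_smul, ← Submodule.Quotient.mk_smul,
      Submodule.Quotient.eq]
    rw [Ideal.smul_eq_mul, Ideal.mul_top]
    rw [← sub_smul, smul_eq_mul]
    exact Ideal.mul_mem_right _ _ hdiff
  have hF : IsSMulRegular (Q ⧸ (Ideal.ofList t • ⊤ : Submodule Q Q)) (∑ i, a i * f i) := by
    intro x y hxy
    apply hax
    show (a j * f j) • x = (a j * f j) • y
    rw [← hsmul_eq, ← hsmul_eq]
    exact hxy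
  have hwF : IsWeaklyRegular Q (t ++ [∑ i, a i * f i]) :=
    (isWeaklyRegular_append_iff _ _ _).mpr
      ⟨hwt, (isWeaklyRegular_singleton_iff _ _).mpr hF⟩
  have hmem : ∀ r ∈ t ++ [∑ i, a i * f i], r ∈ maximalIdeal Q := by
    intro r hr
    rcases List.mem_append.mp hr with hr | hr
    · exact aux_mem_maximalIdeal_of_isRegular h ((List.eraseIdx_sublist l j).mem hr)
    · rw [List.mem_singleton] at hr
      subst hr
      refine Ideal.sum_mem _ fun i _ => Ideal.mul_mem_left _ _ ?_
      exact aux_mem_maximalIdeal_of_isRegular h (by simp [hl, List.mem_ofFn])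
  have hwF2 := IsLocalRing.isWeaklyRegular_of_perm_of_subset_maximalIdeal hwF
    (List.perm_append_singleton _ _) hmem
  exact ((isWeaklyRegular_cons_iff _ _ _).mp hwF2).1

end QFacts


section PFacts
open scoped Classical

variable {Q : Type*} [CommRing Q] {c : ℕ}

/-- Partial substitution `X i ↦ a i` for `i ∈ S`. -/
noncomputable def auxSub (a : Fin c → Q) (S : Set (Fin c)) :
    MvPolynomial (Fin c) Q →ₐ[Q] MvPolynomial (Fin c) Q :=
  aeval (fun i => if i ∈ S then C (a i) else X i)

lemma auxSub_X (a : Fin c → Q) (S : Set (Fin c)) (i : Fin c) :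
    auxSub a S (X i) = if i ∈ S then C (a i) else X i := by
  simp [auxSub]

lemma auxSub_C (a : Fin c → Q) (S : Set (Fin c)) (q : Q) :
    auxSub a S (C q) = C q := by
  simp [auxSub, algebraMap_eq]

lemma aux_sub_auxSub_mem (a : Fin c → Q) (S : Set (Fin c))
    (p : MvPolynomial (Fin c) Q) :
    p - auxSub a S p ∈ Ideal.span ((fun i => X i - C (a i)) '' S) := by
  induction p using MvPolynomial.induction_on with
  | C q => rw [auxSub_C, sub_self]; exact Ideal.zero_mem _
  | add p q hp hq =>
    rw [map_add]
    have : p + q - (auxSub a S p + auxSub a S q)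
        = (p - auxSub a S p) + (q - auxSub a S q) := by ring
    rw [this]; exact Ideal.add_mem _ hp hq
  | mul_X p i hp =>
    rw [map_mul, auxSub_X]
    have : p * X i - auxSub a S p * (if i ∈ S then C (a i) else X i)
        = (p - auxSub a S p) * X i
          + auxSub a S p * (X i - (if i ∈ S then C (a i) else X i)) := by ring
    rw [this]
    refine Ideal.add_mem _ (Ideal.mul_mem_right _ _ hp) ?_
    by_cases hiS : i ∈ S
    · rw [if_pos hiS]
      exact Ideal.mul_mem_left _ _ (Ideal.subset_span ⟨i, hiS, rfl⟩)
    · rw [if_neg hiS, sub_self, mul_zero]; exact Ideal.zero_mem _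

/-- The partially substituted hypersurface polynomial. -/
noncomputable def auxW (f a : Fin c → Q) (S : Set (Fin c)) : MvPolynomial (Fin c) Q :=
  ∑ i, C (f i) * (if i ∈ S then C (a i) else X i)

lemma auxSub_w (f a : Fin c → Q) (S : Set (Fin c)) :
    auxSub a S (∑ i, C (f i) * X i) = auxW f a S := by
  rw [map_sum, auxW]
  refine Finset.sum_congr rfl fun i _ => ?_
  rw [map_mul, auxSub_C, auxSub_X]

lemma auxSub_auxW (f a : Fin c → Q) (k : Fin c) :
    auxSub a {k} (auxW f a {i | (i : ℕ) < (k : ℕ)}) = auxW f a {i | (i : ℕ) < (k : ℕ) + 1} := by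
  rw [auxW, map_sum, auxW]
  refine Finset.sum_congr rfl fun i _ => ?_
  rw [map_mul, auxSub_C]
  congr 1
  by_cases h1 : i ∈ {i : Fin c | (i : ℕ) < (k : ℕ)}
  · have h1' : i ∈ {i : Fin c | (i : ℕ) < (k : ℕ) + 1} := by
      simp only [Set.mem_setOf_eq] at h1 ⊢; omega
    rw [if_pos h1, auxSub_C, if_pos h1']
  · rw [if_neg h1, auxSub_X]
    by_cases h2 : i = k
    · subst h2
      have h3 : i ∈ ({i} : Set (Fin c)) := rfl
      have h4 : i ∈ {j : Fin c | (j : ℕ) < (i : ℕ) + 1} := by simp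
      rw [if_pos h3, if_pos h4]
    · have h3 : i ∉ ({k} : Set (Fin c)) := h2
      have h4 : i ∉ {j : Fin c | (j : ℕ) < (k : ℕ) + 1} := by
        intro hmem
        simp only [Set.mem_setOf_eq] at hmem h1
        exact h2 (Fin.ext (by omega))
      rw [if_neg h3, if_neg h4]

lemma aux_C_nzd {u : Q} (hu : u ∈ nonZeroDivisors Q) {ι : Type*} :
    (C u : MvPolynomial ι Q) ∈ nonZeroDivisors (MvPolynomial ι Q) := by
  rw [mem_nonZeroDivisors_iff_right]; intro r hr
  ext m
  rw [mul_comm] at hr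
  have := congrArg (coeff m) hr
  rw [coeff_C_mul, coeff_zero] at this
  rw [coeff_zero]
  exact (mem_nonZeroDivisors_iff_right.mp hu) _ (by rw [mul_comm]; exact this)

lemma aux_ringEquiv_nzd {A B : Type*} [CommRing A] [CommRing B] (e : A ≃+* B)
    {x : A} (hx : x ∈ nonZeroDivisors A) : e x ∈ nonZeroDivisors B := by
  rw [mem_nonZeroDivisors_iff_right]; intro y hy
  have : e.symm y * x = 0 := by
    have := congrArg e.symm hy
    simpa using this
  have h0 : e.symm y = 0 := (mem_nonZeroDivisors_iff_right.mp hx) _ this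
  have := congrArg e h0
  simpa using this

lemma aux_linear_nzd {m : ℕ} (b : Fin (m + 1)) (u v : MvPolynomial (Fin (m + 1)) Q)
    (hu : u ∈ nonZeroDivisors (MvPolynomial (Fin (m + 1)) Q))
    (hub : degreeOf b u = 0) (hvb : degreeOf b v = 0) :
    u * X b + v ∈ nonZeroDivisors (MvPolynomial (Fin (m + 1)) Q) := by
  rcases subsingleton_or_nontrivial Q with hQ | hQ
  · rw [mem_nonZeroDivisors_iff_right]; intro y _; exact Subsingleton.elim _ _
  classical
  set e : Fin (m + 1) ≃ Fin (m + 1) := Equiv.swap b 0 with he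
  set φ : MvPolynomial (Fin (m + 1)) Q ≃+* Polynomial (MvPolynomial (Fin m) Q) :=
    ((renameEquiv Q e).trans (finSuccEquiv Q m)).toRingEquiv with hφ
  have hφC : ∀ p, degreeOf b p = 0 → ∃ q, Polynomial.C q = φ p := by
    intro p hp
    apply Polynomial.natDegree_eq_zero.mp
    show ((finSuccEquiv Q m) ((renameEquiv Q e) p)).natDegree = 0
    rw [natDegree_finSuccEquiv, renameEquiv_apply]
    have h1 : degreeOf (e b) (rename (⇑e) p) = degreeOf b p :=
      degreeOf_rename_of_injective e.injective b
    have h2 : e b = 0 := Equiv.swap_apply_left b 0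
    rw [h2] at h1
    rw [h1]
    exact hp
  obtain ⟨u', hu'⟩ := hφC u hub
  obtain ⟨v', hv'⟩ := hφC v hvb
  have hφu : (Polynomial.C u' : Polynomial (MvPolynomial (Fin m) Q)) ∈
      nonZeroDivisors _ := hu' ▸ aux_ringEquiv_nzd φ hu
  have hu'nzd : u' ∈ nonZeroDivisors (MvPolynomial (Fin m) Q) := by
    rw [mem_nonZeroDivisors_iff_right]; intro r hr
    have : Polynomial.C r * Polynomial.C u' = 0 := by
      rw [← map_mul, hr, map_zero]
    have h0 := (mem_nonZeroDivisors_iff_right.mp hφu) _ this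
    have := congrArg (Polynomial.coeff · 0) h0
    simpa using this
  have hφX : φ (X b) = Polynomial.X := by
    show (finSuccEquiv Q m) ((renameEquiv Q e) (X b)) = _
    rw [renameEquiv_apply, rename_X]
    have h2 : e b = 0 := Equiv.swap_apply_left b 0
    rw [h2, finSuccEquiv_X_zero]
  have himg : φ (u * X b + v) = Polynomial.C u' * Polynomial.X + Polynomial.C v' := by
    rw [map_add, map_mul, hφX, hu', hv']
  have hu'0 : u' ≠ 0 := nonZeroDivisors.ne_zero hu'nzd
  have hlin : (Polynomial.C u' * Polynomial.X + Polynomial.C v') ∈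
      nonZeroDivisors (Polynomial (MvPolynomial (Fin m) Q)) := by
    apply Polynomial.mem_nonZeroDivisors_of_leadingCoeff
    rw [Polynomial.leadingCoeff_linear hu'0]
    exact hu'nzd
  have := aux_ringEquiv_nzd φ.symm (himg ▸ hlin)
  simpa using this

end PFacts

section PFacts2
open scoped Classical

variable {Q : Type*} [CommRing Q]

lemma auxW_nzd {m : ℕ} (f a : Fin (m + 1) → Q)
    (hf1 : f (Fin.last m) ∈ nonZeroDivisors Q)
    (hF : (∑ i, a i * f i) ∈ nonZeroDivisors Q) (k : ℕ) (hk : k ≤ m + 1) :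
    auxW f a {i | (i : ℕ) < k} ∈ nonZeroDivisors (MvPolynomial (Fin (m + 1)) Q) := by
  rcases subsingleton_or_nontrivial Q with hQ | hQ
  · haveI : Subsingleton (MvPolynomial (Fin (m + 1)) Q) :=
      ⟨fun p q => by ext mm; exact Subsingleton.elim _ _⟩
    rw [mem_nonZeroDivisors_iff_right]; intro y _; exact Subsingleton.elim _ _
  by_cases hkm : k = m + 1
  · subst hkm
    have heq : auxW f a {i : Fin (m + 1) | (i : ℕ) < m + 1} = C (∑ i, f i * a i) := by
      rw [auxW, map_sum]
      refine Finset.sum_congr rfl fun i _ => ?_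
      rw [if_pos (show i ∈ {i : Fin (m + 1) | (i : ℕ) < m + 1} from i.isLt), map_mul]
    rw [heq, show (∑ i, f i * a i) = ∑ i, a i * f i from
      Finset.sum_congr rfl fun i _ => mul_comm _ _]
    exact aux_C_nzd hF
  · have hk' : k ≤ m := by omega
    have hsplit : auxW f a {i : Fin (m + 1) | (i : ℕ) < k}
        = C (f (Fin.last m)) * X (Fin.last m)
          + ∑ i ∈ Finset.univ.erase (Fin.last m),
              C (f i) * (@ite _ (i ∈ {i : Fin (m + 1) | (i : ℕ) < k})
                (Classical.propDecidable _) (C (a i)) (X i)) := by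
      rw [auxW, ← Finset.add_sum_erase _ _ (Finset.mem_univ (Fin.last m)),
        if_neg (show ¬ (Fin.last m : Fin (m+1)) ∈ {i : Fin (m + 1) | (i : ℕ) < k} from by
          simp only [Set.mem_setOf_eq, Fin.val_last]; omega)]
    rw [hsplit]
    refine aux_linear_nzd (Fin.last m) _ _ (aux_C_nzd hf1) (degreeOf_C _ _) ?_
    refine Nat.le_zero.mp (le_trans (degreeOf_sum_le _ _ _) (Finset.sup_le fun i hi => ?_))
    have hil : i ≠ Fin.last m := (Finset.mem_erase.mp hi).1
    refine le_trans (degreeOf_mul_le _ _ _) ?_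
    rw [degreeOf_C]
    by_cases hik : i ∈ {i : Fin (m + 1) | (i : ℕ) < k}
    · rw [if_pos hik, degreeOf_C]
    · rw [if_neg hik, degreeOf_X, if_neg (Ne.symm hil)]

lemma aux_eta_nzd {m : ℕ} (a : Fin (m + 1) → Q) (k : Fin (m + 1)) :
    (X k - C (a k)) ∈ nonZeroDivisors (MvPolynomial (Fin (m + 1)) Q) := by
  have h1 : (1 : MvPolynomial (Fin (m + 1)) Q) * X k + (- C (a k)) = X k - C (a k) := by ring
  rw [← h1]
  refine aux_linear_nzd k _ _ (one_mem _) ?_ ?_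
  · rw [show (1 : MvPolynomial (Fin (m + 1)) Q) = C 1 from (map_one C).symm]
    exact degreeOf_C _ _
  · rw [show (-C (a k) : MvPolynomial (Fin (m + 1)) Q) = C (-(a k)) from (map_neg C _).symm]
    exact degreeOf_C _ _

lemma aux_step {m : ℕ} (f a : Fin (m + 1) → Q)
    (hf1 : f (Fin.last m) ∈ nonZeroDivisors Q)
    (hF : (∑ i, a i * f i) ∈ nonZeroDivisors Q) (k : Fin (m + 1)) :
    ∀ p, (X k - C (a k)) * p ∈ Ideal.span {auxW f a {i | (i : ℕ) < (k : ℕ)}} →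
      p ∈ Ideal.span {auxW f a {i | (i : ℕ) < (k : ℕ)}} := by
  intro p hp
  rw [Ideal.mem_span_singleton] at hp ⊢
  obtain ⟨q, hq⟩ := hp
  have hσ : auxSub a {k} ((X k - C (a k)) * p) = 0 := by
    rw [map_mul, map_sub, auxSub_X, auxSub_C, if_pos (show k ∈ ({k} : Set _) from rfl),
      sub_self, zero_mul]
  rw [hq, map_mul, auxSub_auxW] at hσ
  have hq0 : auxSub a {k} q = 0 := by
    have hv := auxW_nzd f a hf1 hF ((k : ℕ) + 1) (by omega)
    rw [mul_comm] at hσ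
    exact (mem_nonZeroDivisors_iff_right.mp hv) _ hσ
  have hqmem : q ∈ Ideal.span ((fun i => X i - C (a i)) '' ({k} : Set (Fin (m + 1)))) := by
    have h := aux_sub_auxSub_mem a {k} q
    rwa [hq0, sub_zero] at h
  rw [Set.image_singleton, Ideal.mem_span_singleton] at hqmem
  obtain ⟨q', hq'⟩ := hqmem
  refine ⟨q', ?_⟩
  have hηnzd := aux_eta_nzd a k
  have hcancel : (p - auxW f a {i | (i : ℕ) < (k : ℕ)} * q') * (X k - C (a k)) = 0 := by
    have : (p - auxW f a {i | (i : ℕ) < (k : ℕ)} * q') * (X k - C (a k))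
        = (X k - C (a k)) * p - auxW f a {i | (i : ℕ) < (k : ℕ)} * ((X k - C (a k)) * q') := by
      ring
    rw [this, ← hq', ← hq]
    ring
  have := (mem_nonZeroDivisors_iff_right.mp hηnzd) _ hcancel
  have := sub_eq_zero.mp this
  exact this

lemma aux_key {m : ℕ} (f a : Fin (m + 1) → Q)
    (hf1 : f (Fin.last m) ∈ nonZeroDivisors Q)
    (hF : (∑ i, a i * f i) ∈ nonZeroDivisors Q) (k : Fin (m + 1)) :
    ∀ p, (X k - C (a k)) * p ∈
        Ideal.span {∑ i, C (f i) * X i}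
          ⊔ Ideal.span ((fun i => X i - C (a i)) '' {i | (i : ℕ) < (k : ℕ)}) →
      p ∈ Ideal.span {∑ i, C (f i) * X i}
          ⊔ Ideal.span ((fun i => X i - C (a i)) '' {i | (i : ℕ) < (k : ℕ)}) := by
  set S : Set (Fin (m + 1)) := {i | (i : ℕ) < (k : ℕ)} with hS
  have hmap : ∀ x ∈ Ideal.span {∑ i, C (f i) * X i}
      ⊔ Ideal.span ((fun i => X i - C (a i)) '' S),
      auxSub a S x ∈ Ideal.span {auxW f a S} := by
    intro x hx
    rw [← Ideal.span_union] at hx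
    induction hx using Submodule.span_induction with
    | mem y hy =>
      rcases hy with hy | hy
      · rw [Set.mem_singleton_iff] at hy
        subst hy
        rw [auxSub_w]
        exact Ideal.subset_span rfl
      · obtain ⟨i, hiS, rfl⟩ := hy
        rw [map_sub, auxSub_X, auxSub_C, if_pos hiS, sub_self]
        exact Ideal.zero_mem _
    | zero => rw [map_zero]; exact Ideal.zero_mem _
    | add y z _ _ hy hz => rw [map_add]; exact Ideal.add_mem _ hy hz
    | smul r y _ hy =>
      rw [smul_eq_mul, map_mul]
      exact Ideal.mul_mem_left _ _ hy
  intro p hp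
  have h1 := hmap _ hp
  rw [map_mul, map_sub, auxSub_X, auxSub_C,
    if_neg (show k ∉ S from by simp [hS])] at h1
  have h2 : auxSub a S p ∈ Ideal.span {auxW f a S} := aux_step f a hf1 hF k _ h1
  have h3 : p - auxSub a S p ∈ Ideal.span ((fun i => X i - C (a i)) '' S) :=
    aux_sub_auxSub_mem a S p
  have h4 : Ideal.span {auxW f a S} ≤ Ideal.span {∑ i, C (f i) * X i}
      ⊔ Ideal.span ((fun i => X i - C (a i)) '' S) := by
    rw [Ideal.span_le]
    intro x hx
    rw [Set.mem_singleton_iff] at hx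
    subst hx
    have h5 := aux_sub_auxSub_mem a S (∑ i, C (f i) * X i)
    rw [auxSub_w] at h5
    have heq : auxW f a S
        = (∑ i, C (f i) * X i) - ((∑ i, C (f i) * X i) - auxW f a S) := by ring
    rw [heq]
    exact sub_mem (Ideal.mem_sup_left (Ideal.subset_span rfl)) (Ideal.mem_sup_right h5)
  have heq : p = (p - auxSub a S p) + auxSub a S p := by ring
  rw [heq]
  exact add_mem (Ideal.mem_sup_right h3) (h4 h2)

lemma aux_isSMulRegular_quot {A : Type*} [CommRing A] (J : Ideal A) (r : A)
    (h : ∀ z, r * z ∈ J → z ∈ J) :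
    IsSMulRegular (A ⧸ (J • ⊤ : Submodule A A)) r := by
  have e : (J • ⊤ : Submodule A A) = J := by rw [Ideal.smul_eq_mul, Ideal.mul_top]
  rw [(Submodule.quotEquivOfEq _ _ e).isSMulRegular_congr]
  intro x y hxy
  obtain ⟨p, rfl⟩ := Submodule.Quotient.mk_surjective _ x
  obtain ⟨q, rfl⟩ := Submodule.Quotient.mk_surjective _ y
  simp only [← Submodule.Quotient.mk_smul, smul_eq_mul] at hxy
  rw [Submodule.Quotient.eq] at hxy
  rw [Submodule.Quotient.eq]
  have : r * (p - q) ∈ J := by rwa [mul_sub]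
  exact h _ this

end PFacts2

section Bridge

variable {Q : Type*} [CommRing Q]

lemma aux_nzd_of_isSMulRegular {r : Q} (h : IsSMulRegular Q r) :
    r ∈ nonZeroDivisors Q := by
  rw [mem_nonZeroDivisors_iff_right]; intro z hz
  have : r • z = r • 0 := by rw [smul_eq_mul, smul_eq_mul, mul_zero, mul_comm]; exact hz
  simpa using h this

lemma auxSub_univ {c : ℕ} (a : Fin c → Q) (p : MvPolynomial (Fin c) Q) :
    auxSub a Set.univ p = C (aeval a p) := by
  have hhom : (auxSub a Set.univ)
      = (Algebra.ofId Q (MvPolynomial (Fin c) Q)).comp (aeval a) := by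
    apply MvPolynomial.algHom_ext
    intro i
    rw [auxSub_X, if_pos (Set.mem_univ i)]
    simp [Algebra.ofId_apply, algebraMap_eq]
  rw [hhom]
  simp [Algebra.ofId_apply, algebraMap_eq]

end Bridge

/-- Let `Q` be a regular local ring, `f₁, …, f_c` (`c ≥ 2`) a regular sequence in `Q`,
`R = Q[x₁, …, x_c]/(f₁x₁ + ⋯ + f_cx_c)` the generic hypersurface, and `a₁, …, a_c ∈ Q`
with at least one `aᵢ` a unit.  Then `x₁ − a₁, …, x_c − a_c` is a regular sequence in
`R`, and `R/(x₁ − a₁, …, x_c − a_c) ≅ Q/(a₁f₁ + ⋯ + a_cf_c)`. -/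
theorem regular_sequence_and_specialization
    (Q : Type*) [CommRing Q] [IsLocalRing Q] [IsNoetherianRing Q]
    (hQ : IsRegularLocal Q)
    (c : ℕ) (hc : 2 ≤ c) (f : Fin c → Q)
    (hf : RingTheory.Sequence.IsRegular Q (List.ofFn f))
    (a : Fin c → Q) (ha : ∃ i, IsUnit (a i)) :
    RingTheory.Sequence.IsRegular
      (MvPolynomial (Fin c) Q ⧸
        Ideal.span {(∑ i, MvPolynomial.C (f i) * MvPolynomial.X i : MvPolynomial (Fin c) Q)})
      (List.ofFn fun i =>
        Ideal.Quotient.mk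
          (Ideal.span {(∑ i, MvPolynomial.C (f i) * MvPolynomial.X i : MvPolynomial (Fin c) Q)})
          (MvPolynomial.X i - MvPolynomial.C (a i))) ∧
    Nonempty
      (((MvPolynomial (Fin c) Q ⧸
          Ideal.span {(∑ i, MvPolynomial.C (f i) * MvPolynomial.X i : MvPolynomial (Fin c) Q)}) ⧸
        Ideal.span (Set.range fun i =>
          Ideal.Quotient.mk
            (Ideal.span {(∑ i, MvPolynomial.C (f i) * MvPolynomial.X i : MvPolynomial (Fin c) Q)})
            (MvPolynomial.X i - MvPolynomial.C (a i)))) ≃+*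
        (Q ⧸ Ideal.span {∑ i, a i * f i})) := by
  classical
  obtain ⟨m, rfl⟩ : ∃ m, c = m + 1 := ⟨c - 1, by omega⟩
  obtain ⟨j, hj⟩ := ha
  set P := MvPolynomial (Fin (m + 1)) Q with hP
  set w : P := ∑ i, C (f i) * X i with hw
  set I : Ideal P := Ideal.span {w} with hI
  set mk := Ideal.Quotient.mk I with hmk
  -- Q-side facts
  have hf1 : f (Fin.last m) ∈ nonZeroDivisors Q :=
    aux_nzd_of_isSMulRegular (aux_isSMulRegular_last f hf)
  have hF : (∑ i, a i * f i) ∈ nonZeroDivisors Q :=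
    aux_nzd_of_isSMulRegular (aux_isSMulRegular_sum f a hf hj)
  have hFm : (∑ i, a i * f i) ∈ maximalIdeal Q := by
    refine Ideal.sum_mem _ fun i _ => Ideal.mul_mem_left _ _ ?_
    exact aux_mem_maximalIdeal_of_isRegular hf (List.mem_ofFn.mpr ⟨i, rfl⟩)
  -- the full evaluation homomorphism
  set T : Ideal Q := Ideal.span {∑ i, a i * f i} with hT
  set χ : P →+* Q ⧸ T :=
    (Ideal.Quotient.mk T).comp ((aeval a : P →ₐ[Q] Q) : P →+* Q) with hχ
  have hχC : ∀ q : Q, χ (C q) = Ideal.Quotient.mk T q := by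
    intro q
    rw [hχ, RingHom.comp_apply]
    norm_cast
    rw [aeval_C, Algebra.algebraMap_self_apply]
  have hχX : ∀ i, χ (X i) = Ideal.Quotient.mk T (a i) := by
    intro i
    rw [hχ, RingHom.comp_apply]
    norm_cast
    rw [aeval_X]
  have haw : (aeval a) w = ∑ i, a i * f i := by
    rw [hw, map_sum]
    refine Finset.sum_congr rfl fun i _ => ?_
    rw [map_mul, aeval_C, aeval_X, Algebra.algebraMap_self_apply, mul_comm]
  have hχw : χ w = 0 := by
    rw [hχ, RingHom.comp_apply]
    norm_cast
    rw [haw, Ideal.Quotient.eq_zero_iff_mem]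
    exact Ideal.subset_span rfl
  have hrange_ofFn : {r : P | r ∈ List.ofFn (fun i : Fin (m + 1) => X i - C (a i) : Fin (m+1) → P)} = Set.range (fun i : Fin (m + 1) => X i - C (a i) : Fin (m+1) → P) := by
    ext r
    exact List.mem_ofFn
  have hηker : ∀ i, χ (X i - C (a i)) = 0 := by
    intro i
    rw [map_sub, hχX, hχC, sub_self]
  have hkerle : I ⊔ Ideal.span (Set.range (fun i : Fin (m + 1) => X i - C (a i) : Fin (m+1) → P)) ≤ RingHom.ker χ := by
    rw [sup_le_iff]
    constructor
    · rw [hI, Ideal.span_le]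
      intro x hx
      rw [Set.mem_singleton_iff] at hx
      subst hx
      exact hχw
    · rw [Ideal.span_le]
      rintro x ⟨i, rfl⟩
      exact hηker i
  have hCF_mem : (C (∑ i, a i * f i) : P) ∈ I ⊔ Ideal.span (Set.range (fun i : Fin (m + 1) => X i - C (a i) : Fin (m+1) → P)) := by
    have h5 := aux_sub_auxSub_mem a Set.univ w
    rw [auxSub_univ, haw, Set.image_univ] at h5
    have heq : (C (∑ i, a i * f i) : P) = w - (w - C (∑ i, a i * f i)) := by ring
    rw [heq]
    refine sub_mem (Ideal.mem_sup_left ?_) (Ideal.mem_sup_right h5)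
    rw [hI]
    exact Ideal.subset_span rfl
  have hker_eq : I ⊔ Ideal.span (Set.range (fun i : Fin (m + 1) => X i - C (a i) : Fin (m+1) → P)) = RingHom.ker χ := by
    refine le_antisymm hkerle ?_
    intro p hp
    rw [RingHom.mem_ker, hχ, RingHom.comp_apply] at hp
    have hp2 : (aeval a) p ∈ T := by
      rw [← Ideal.Quotient.eq_zero_iff_mem]
      exact_mod_cast hp
    rw [hT, Ideal.mem_span_singleton] at hp2
    obtain ⟨t, ht⟩ := hp2
    have h5 := aux_sub_auxSub_mem a Set.univ p
    rw [Set.image_univ] at h5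
    have heq : p = (p - auxSub a Set.univ p) + auxSub a Set.univ p := by ring
    rw [heq]
    refine add_mem (Ideal.mem_sup_right h5) ?_
    rw [auxSub_univ, ht, map_mul]
    exact Ideal.mul_mem_right _ _ hCF_mem
  have hχsurj : Function.Surjective χ := by
    intro y
    obtain ⟨q, rfl⟩ := Ideal.Quotient.mk_surjective y
    exact ⟨C q, hχC q⟩
  constructor
  · rw [RingTheory.Sequence.isRegular_iff]
    constructor
    · rw [RingTheory.Sequence.isWeaklyRegular_iff]
      intro n hn
      have hn' : n < m + 1 := by simpa using hn
      set k : Fin (m + 1) := ⟨n, hn'⟩ with hk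
      have htake : (List.ofFn fun i => mk (X i - C (a i))).take n
          = ((List.ofFn (fun i : Fin (m + 1) => X i - C (a i) : Fin (m+1) → P)).take n).map mk := by
        rw [List.map_take, List.map_ofFn]
        rfl
      simp only [List.getElem_ofFn]
      rw [htake, ← Ideal.map_ofList]
      apply aux_isSMulRegular_quot
      intro z hz
      obtain ⟨p, rfl⟩ := Ideal.Quotient.mk_surjective z
      rw [← map_mul, Ideal.mem_quotient_iff_mem_sup] at hz
      rw [Ideal.mem_quotient_iff_mem_sup]
      have hJn : Ideal.ofList ((List.ofFn (fun i : Fin (m + 1) => X i - C (a i) : Fin (m+1) → P)).take n)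
          = Ideal.span ((fun i => X i - C (a i)) '' {i : Fin (m + 1) | (i : ℕ) < (k : ℕ)}) := by
        apply congrArg Ideal.span
        ext r
        simp only [Set.mem_setOf_eq, Set.mem_image]
        constructor
        · intro hr
          rw [List.mem_take_iff_getElem] at hr
          obtain ⟨i, hi, he⟩ := hr
          rw [List.length_ofFn] at hi
          refine ⟨⟨i, by omega⟩, by simp [hk]; omega, ?_⟩
          rw [List.getElem_ofFn] at he
          exact he
        · rintro ⟨i, hik, rfl⟩
          rw [List.mem_take_iff_getElem]
          have hik' : (i : ℕ) < n := hik
          refine ⟨(i : ℕ), by simp [List.length_ofFn]; omega, ?_⟩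
          rw [List.getElem_ofFn]
      rw [hJn, sup_comm] at hz
      rw [hJn, sup_comm]
      exact aux_key f a hf1 hF k p hz
    · intro htop
      have h1 : Ideal.ofList (List.ofFn fun i => mk (X i - C (a i))) = ⊤ := by
        rw [Ideal.smul_eq_mul, Ideal.mul_top] at htop
        exact htop.symm
      have hlist : (List.ofFn (fun i : Fin (m + 1) => X i - C (a i) : Fin (m+1) → P)).map mk = List.ofFn fun i => mk (X i - C (a i)) := by
        rw [List.map_ofFn]
        rfl
      have h2 : (1 : P ⧸ I) ∈ Ideal.map mk (Ideal.ofList (List.ofFn (fun i : Fin (m + 1) => X i - C (a i) : Fin (m+1) → P))) := by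
        rw [Ideal.map_ofList, hlist, h1]
        trivial
      rw [show (1 : P ⧸ I) = mk 1 from (map_one mk).symm,
        Ideal.mem_quotient_iff_mem_sup] at h2
      have h3 : (1 : P) ∈ RingHom.ker χ := by
        apply hkerle
        rw [show Ideal.ofList (List.ofFn (fun i : Fin (m + 1) => X i - C (a i) : Fin (m+1) → P)) = Ideal.span (Set.range (fun i : Fin (m + 1) => X i - C (a i) : Fin (m+1) → P)) from
          congrArg Ideal.span hrange_ofFn, sup_comm] at h2
        exact h2
      rw [RingHom.mem_ker, map_one] at h3
      have h4 : (1 : Q) ∈ T := by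
        rw [← Ideal.Quotient.eq_zero_iff_mem, map_one]
        exact h3
      have h5 : T ≤ maximalIdeal Q := by
        rw [hT, Ideal.span_le]
        intro x hx
        rw [Set.mem_singleton_iff] at hx
        subst hx
        exact hFm
      exact one_notMem_nonunits ((mem_maximalIdeal _).mp (h5 h4))
  · refine ⟨?_⟩
    have hspan : Ideal.span (Set.range fun i => mk (X i - C (a i)))
        = Ideal.map mk (Ideal.span (Set.range (fun i : Fin (m + 1) => X i - C (a i) : Fin (m+1) → P))) := by
      rw [Ideal.map_span]
      congr 1
      rw [← Set.range_comp]
      rfl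
    exact (Ideal.quotEquivOfEq hspan).trans
      ((DoubleQuot.quotQuotEquivQuotSup I (Ideal.span (Set.range (fun i : Fin (m + 1) => X i - C (a i) : Fin (m+1) → P)))).trans
        ((Ideal.quotEquivOfEq hker_eq).trans
          (RingHom.quotientKerEquivOfSurjective hχsurj)))
end

section
/- Let C be a totally acyclic complex of finitely generated free modules over a Gorenstein local ring R, serving as a complete resolution of a finitely generated R-module M (i.e., C agrees with a free resolution of M in all degrees ≥ i for some i ≥ 0). Then C is contractible if and only if M has finite projective dimension over R. -/
open CategoryTheory Opposite

universe u

/-- A Gorenstein local ring: a commutative Noetherian local ring of finite injective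
dimension over itself, expressed via eventual vanishing of `Ext^i(M, R)` for all
finitely generated modules `M`. -/
def IsGorensteinLocal (R : Type u) [CommRing R] [IsLocalRing R] [IsNoetherianRing R] : Prop :=
  ∃ n : ℕ, ∀ M : ModuleCat.{u} R, Module.Finite R M →
    ∀ i : ℕ, n < i →
      Subsingleton (((Ext R (ModuleCat.{u} R) i).obj (op M)).obj (ModuleCat.of R R))

/-- A module `M` has finite projective dimension: `Ext^i(M, -)` vanishes for all
sufficiently large `i`. -/
def HasFiniteProjectiveDimension
    (R : Type u) [CommRing R] (M : ModuleCat.{u} R) : Prop :=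
  ∃ n : ℕ, ∀ N : ModuleCat.{u} R, ∀ i : ℕ, n < i →
    Subsingleton (((Ext R (ModuleCat.{u} R) i).obj (op M)).obj N)

namespace CompleteResAux
variable {R : Type u} [CommRing R]

section C
variable (C : ChainComplex (ModuleCat.{u} R) ℤ)

/-- cycles in degree n : kernel of `d n (n-1)` -/
abbrev Zc (n : ℤ) : Submodule R (C.X n) := LinearMap.ker ((C.d n (n-1)).hom : C.X n →ₗ[R] C.X (n-1))

lemma d_mem_Zc {n m : ℤ} (x : C.X n) : (C.d n m x : C.X m) ∈ Zc C m := by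
  show (C.d m (m-1)) (C.d n m x) = 0
  have := C.d_comp_d n m (m-1)
  calc (C.d m (m-1)) (C.d n m x) = (C.d n m ≫ C.d m (m-1)) x := rfl
    _ = 0 := by rw [this]; rfl

/-- corestriction of `d n (n-1)` to the cycles -/
def dRes (n : ℤ) : C.X n →ₗ[R] ↥(Zc C (n-1)) :=
  LinearMap.codRestrict _ ((C.d n (n-1)).hom : C.X n →ₗ[R] C.X (n-1)) (fun x => d_mem_Zc C x)

@[simp] lemma dRes_apply (n : ℤ) (x : C.X n) : ((dRes C n x : ↥(Zc C (n-1))) : C.X (n-1)) = C.d n (n-1) x := rfl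

/-- corestriction of `d (n+1) n` to the cycles -/
def dTo (n : ℤ) : C.X (n+1) →ₗ[R] ↥(Zc C n) :=
  LinearMap.codRestrict _ ((C.d (n+1) n).hom : C.X (n+1) →ₗ[R] C.X n) (fun x => d_mem_Zc C x)

@[simp] lemma dTo_apply (n : ℤ) (x : C.X (n+1)) : ((dTo C n x : ↥(Zc C n)) : C.X n) = C.d (n+1) n x := rfl

/-- build a contracting homotopy from sections of the (corestricted) differentials -/
noncomputable def homotopyOfSections
    (σ : ∀ n : ℤ, ↥(Zc C n) →ₗ[R] C.X (n+1))
    (hσ : ∀ n (z : ↥(Zc C n)), C.d (n+1) n (σ n z) = (z : C.X n)) :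
    Homotopy (𝟙 C) 0 := by
  classical
  -- auxiliary maps
  let κ : ∀ n : ℤ, (C.X (n-1+1) ⟶ C.X n) := fun n => (C.XIsoOfEq (show n-1+1 = n by omega)).hom
  let t : ∀ n : ℤ, C.X n →ₗ[R] C.X n := fun n =>
    ((κ n).hom : C.X (n-1+1) →ₗ[R] C.X n) ∘ₗ (σ (n-1)) ∘ₗ (dRes C n)
  have ht : ∀ (n : ℤ) (x : C.X n), C.d n (n-1) (t n x) = C.d n (n-1) x := by
    intro n x
    have h1 : C.d n (n-1) (κ n (σ (n-1) (dRes C n x)))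
        = (κ n ≫ C.d n (n-1)) (σ (n-1) (dRes C n x)) := rfl
    rw [show (t n x : C.X n) = κ n (σ (n-1) (dRes C n x)) from rfl, h1,
      C.XIsoOfEq_hom_comp_d (show n-1+1 = n by omega) (n-1)]
    exact hσ (n-1) (dRes C n x)
  let ρ : ∀ n : ℤ, C.X n →ₗ[R] ↥(Zc C n) := fun n =>
    LinearMap.codRestrict _ (LinearMap.id - t n)
      (fun x => by
        show C.d n (n-1) (x - t n x) = 0
        rw [map_sub, ht n x, sub_self])
  have hρval : ∀ (n : ℤ) (x : C.X n), ((ρ n x : ↥(Zc C n)) : C.X n) = x - t n x := fun _ _ => rfl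
  have hρz : ∀ (n : ℤ) (z : ↥(Zc C n)), ρ n (z : C.X n) = z := by
    intro n z
    apply Subtype.ext
    rw [hρval]
    have : dRes C n (z : C.X n) = 0 := by
      apply Subtype.ext; rw [dRes_apply]; exact z.2
    show (z : C.X n) - (κ n) ((σ (n-1)) (dRes C n (z : C.X n))) = z
    rw [this, map_zero, map_zero, sub_zero]
  let s : ∀ n : ℤ, (C.X n ⟶ C.X (n+1)) := fun n => ModuleCat.ofHom ((σ n) ∘ₗ (ρ n) : C.X n →ₗ[R] C.X (n+1))
  exact
  { hom := fun i j =>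
      if h : j = i + 1 then s i ≫ (C.XIsoOfEq h.symm).hom else 0
    zero := fun i j h => by
      rw [dif_neg]
      intro hij
      exact h (by simp [hij])
    comm := fun n => by
      have w1 : (ComplexShape.down ℤ).Rel n (n-1) := by simp
      have w2 : (ComplexShape.down ℤ).Rel (n+1) n := by simp
      rw [dNext_eq _ w1, prevD_eq _ w2]
      rw [dif_pos (show n = (n-1)+1 by omega), dif_pos rfl]
      simp only [HomologicalComplex.XIsoOfEq_rfl, Iso.refl_hom, Category.comp_id,
        HomologicalComplex.zero_f_apply, add_zero]
      apply ModuleCat.hom_ext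
      apply LinearMap.ext
      intro x
      show x = (C.d n (n-1) ≫ (s (n-1) ≫ (C.XIsoOfEq (show (n-1)+1 = n by omega)).hom)) x
        + C.d (n+1) n (s n x)
      have e2 : C.d (n+1) n (s n x) = x - t n x := by
        show C.d (n+1) n (σ n (ρ n x)) = x - t n x
        rw [hσ n (ρ n x), hρval]
      have e1 : (C.d n (n-1) ≫ (s (n-1) ≫ (C.XIsoOfEq (show (n-1)+1 = n by omega)).hom)) x
          = t n x := by
        show (κ n) (σ (n-1) (ρ (n-1) (C.d n (n-1) x))) = t n x
        have : ρ (n-1) (C.d n (n-1) x) = dRes C n x := by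
          apply Subtype.ext
          rw [hρval, dRes_apply]
          have hz : dRes C (n-1) (C.d n (n-1) x) = 0 := by
            apply Subtype.ext
            rw [dRes_apply]
            calc (C.d (n-1) (n-1-1)) (C.d n (n-1) x) = (C.d n (n-1) ≫ C.d (n-1) (n-1-1)) x := rfl
              _ = 0 := by rw [C.d_comp_d]; rfl
          show C.d n (n-1) x - (κ (n-1)) ((σ (n-1-1)) (dRes C (n-1) (C.d n (n-1) x)))
            = C.d n (n-1) x
          rw [hz, map_zero, map_zero, sub_zero]
        rw [this]
        rfl
      rw [e1, e2]
      abel }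

/-- a contracting homotopy yields sections -/
lemma sections_of_homotopy (h : Homotopy (𝟙 C) 0) (n : ℤ) :
    ∃ σ : ↥(Zc C n) →ₗ[R] C.X (n+1), ∀ z : ↥(Zc C n), C.d (n+1) n (σ z) = (z : C.X n) := by
  refine ⟨((h.hom n (n+1)).hom : C.X n →ₗ[R] C.X (n+1)) ∘ₗ (Zc C n).subtype, fun z => ?_⟩
  have hc := h.comm n
  have w1 : (ComplexShape.down ℤ).Rel n (n-1) := by simp
  have w2 : (ComplexShape.down ℤ).Rel (n+1) n := by simp
  rw [dNext_eq _ w1, prevD_eq _ w2] at hc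
  have h2' := congrArg (fun f : C.X n ⟶ C.X n => f (z : C.X n)) hc
  have h2 : ((𝟙 C : C ⟶ C).f n) (z : C.X n) = (C.d n (n-1) ≫ h.hom (n-1) n) (z : C.X n)
      + (h.hom n (n+1) ≫ C.d (n+1) n) (z : C.X n)
      + ((0 : C ⟶ C).f n) (z : C.X n) := h2'
  have hz : C.d n (n-1) (z : C.X n) = 0 := z.2
  have e0 : ((𝟙 C : C ⟶ C).f n) (z : C.X n) = (z : C.X n) := rfl
  have eA : (C.d n (n-1) ≫ h.hom (n-1) n) (z : C.X n) = 0 := by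
    show h.hom (n-1) n (C.d n (n-1) (z : C.X n)) = 0
    rw [hz, map_zero]
  have eC : ((0 : C ⟶ C).f n) (z : C.X n) = 0 := rfl
  rw [e0, eA, eC, zero_add, add_zero] at h2
  exact h2.symm

/-- cycles are projective if a section exists -/
lemma projective_of_section {n : ℤ} (hfree : Module.Free R ↥(C.X (n+1)))
    (σ : ↥(Zc C n) →ₗ[R] C.X (n+1))
    (hσ : ∀ z : ↥(Zc C n), C.d (n+1) n (σ z) = (z : C.X n)) :
    Module.Projective R ↥(Zc C n) := by
  haveI := hfree
  exact Module.Projective.of_split σ (dTo C n) (by ext z; exact hσ z)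


/-- concrete exactness statement from `ExactAt` -/
lemma exact_concrete (n : ℤ) (h : C.ExactAt n) :
    ∀ x : C.X n, C.d n (n-1) x = 0 → ∃ y : C.X (n+1), C.d (n+1) n y = x := by
  rw [HomologicalComplex.exactAt_iff' C (n+1) n (n-1) (by simp) (by simp)] at h
  rw [ShortComplex.moduleCat_exact_iff] at h
  exact h

lemma dTo_surjective (n : ℤ) (h : C.ExactAt n) : Function.Surjective (dTo C n) := by
  intro z
  obtain ⟨y, hy⟩ := exact_concrete C n h (z : C.X n) z.2
  exact ⟨y, Subtype.ext (by rw [dTo_apply, hy])⟩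

lemma section_of_projective {n : ℤ} (hproj : Module.Projective R ↥(Zc C n)) (h : C.ExactAt n) :
    ∃ σ : ↥(Zc C n) →ₗ[R] C.X (n+1), ∀ z : ↥(Zc C n), C.d (n+1) n (σ z) = (z : C.X n) := by
  obtain ⟨σ, hσ⟩ := Module.projective_lifting_property (dTo C n) LinearMap.id
    (dTo_surjective C n h)
  refine ⟨σ, fun z => ?_⟩
  have := congrArg (fun f => Subtype.val (f z)) hσ
  simpa using this

/-- The key duality descent step: if the cycles in degree `n` are projective, so are those
in degree `n-1`. -/
lemma step_down [IsLocalRing R] [IsNoetherianRing R]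
    (hfree : ∀ n : ℤ, Module.Free R (C.X n)) (hfin : ∀ n : ℤ, Module.Finite R (C.X n))
    (hexact : ∀ n : ℤ, C.ExactAt n)
    (hdual : ∀ n : ℤ,
      Function.Exact (((C.d n (n - 1)).hom : _ →ₗ[R] _).dualMap)
        (((C.d (n + 1) n).hom : _ →ₗ[R] _).dualMap))
    (n : ℤ) (hn : Module.Projective R ↥(Zc C n)) :
    Module.Projective R ↥(Zc C (n-1)) := by
  haveI := hfree n; haveI := hfin n
  haveI := hfree (n+1); haveI := hfin (n+1)
  -- `Zc C n` is finite, finitely presented, flat, hence free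
  haveI : Module.Finite R ↥(Zc C n) := Module.Finite.iff_fg.mpr (IsNoetherian.noetherian _)
  haveI := hn
  haveI : Module.FinitePresentation R ↥(Zc C n) := Module.finitePresentation_of_projective _ _
  haveI : Module.Free R ↥(Zc C n) := Module.free_of_flat_of_isLocalRing
  -- every functional on `Zc C n` extends to `C.X n`
  have hext : ∀ φ : ↥(Zc C n) →ₗ[R] R, ∃ θ : C.X n →ₗ[R] R,
      ∀ z : ↥(Zc C n), θ (z : C.X n) = φ z := by
    intro φ
    have hd := hdual (n+1)
    rw [show (n:ℤ)+1-1 = n from by omega] at hd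
    set ψ : C.X (n+1) →ₗ[R] R := φ ∘ₗ dTo C n with hψ
    have hker : (((C.d (n+1+1) (n+1)).hom : _ →ₗ[R] _).dualMap) ψ = 0 := by
      apply LinearMap.ext
      intro y
      show ψ (C.d (n+1+1) (n+1) y) = 0
      have h0 : dTo C n (C.d (n+1+1) (n+1) y) = 0 := by
        apply Subtype.ext
        rw [dTo_apply]
        calc (C.d (n+1) n) (C.d (n+1+1) (n+1) y) = (C.d (n+1+1) (n+1) ≫ C.d (n+1) n) y := rfl
          _ = 0 := by rw [C.d_comp_d]; rfl
      show φ (dTo C n (C.d (n+1+1) (n+1) y)) = 0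
      rw [h0, map_zero]
    obtain ⟨θ, hθ⟩ := (hd ψ).mp hker
    refine ⟨θ, fun z => ?_⟩
    obtain ⟨y, hy⟩ := exact_concrete C n (hexact n) (z : C.X n) z.2
    have h1 : θ (C.d (n+1) n y) = ψ y := congrArg (fun f => f y) hθ
    rw [← hy, h1]
    show φ (dTo C n y) = φ z
    congr 1
    exact Subtype.ext (by rw [dTo_apply, hy])
  -- build a retraction `C.X n →ₗ Zc C n`
  classical
  let b := Module.Free.chooseBasis R ↥(Zc C n)
  let θ : Module.Free.ChooseBasisIndex R ↥(Zc C n) → (C.X n →ₗ[R] R) :=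
    fun k => (hext (b.coord k)).choose
  have hθ : ∀ k (z : ↥(Zc C n)), θ k (z : C.X n) = b.coord k z := fun k => (hext (b.coord k)).choose_spec
  let ρ : C.X n →ₗ[R] ↥(Zc C n) := ∑ k, (θ k).smulRight (b k)
  have hρ : ∀ z : ↥(Zc C n), ρ (z : C.X n) = z := by
    intro z
    show (∑ k, (θ k).smulRight (b k)) (z : C.X n) = z
    rw [LinearMap.sum_apply]
    simp only [LinearMap.smulRight_apply]
    simp only [hθ]
    exact b.sum_repr z
  -- the quotient `C.X n ⧸ Zc C n` is projective
  let π' : C.X n →ₗ[R] ↥(Zc C (n-1)) :=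
    LinearMap.codRestrict _ ((C.d n (n-1)).hom : C.X n →ₗ[R] C.X (n-1)) (fun x => d_mem_Zc C x)
  have hπ'surj : Function.Surjective π' := by
    intro z
    obtain ⟨y, hy⟩ := exact_concrete C (n-1) (hexact (n-1)) (z : C.X (n-1)) z.2
    refine ⟨(C.XIsoOfEq (show n-1+1 = n from by omega)).hom y, Subtype.ext ?_⟩
    show (C.d n (n-1)) ((C.XIsoOfEq (show n-1+1 = n from by omega)).hom y) = (z : C.X (n-1))
    calc (C.d n (n-1)) ((C.XIsoOfEq (show n-1+1 = n from by omega)).hom y)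
        = ((C.XIsoOfEq (show n-1+1 = n from by omega)).hom ≫ C.d n (n-1)) y := rfl
      _ = (C.d (n-1+1) (n-1)) y := by rw [C.XIsoOfEq_hom_comp_d]
      _ = (z : C.X (n-1)) := hy
  have hkerπ' : LinearMap.ker π' = Zc C n := LinearMap.ker_codRestrict _ _ _
  let g0 : C.X n →ₗ[R] C.X n := LinearMap.id - (Zc C n).subtype ∘ₗ ρ
  have hle : LinearMap.ker π' ≤ LinearMap.ker g0 := by
    rw [hkerπ']
    intro x hx
    show x - (Zc C n).subtype (ρ x) = 0
    have : ρ x = ⟨x, hx⟩ := hρ ⟨x, hx⟩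
    rw [this]
    show x - x = 0
    rw [sub_self]
  let gq : (C.X n ⧸ LinearMap.ker π') →ₗ[R] C.X n := (LinearMap.ker π').liftQ g0 hle
  have hsplit : (LinearMap.ker π').mkQ ∘ₗ gq ∘ₗ (LinearMap.ker π').mkQ
      = (LinearMap.ker π').mkQ := by
    rw [Submodule.liftQ_mkQ]
    apply LinearMap.ext
    intro x
    show (LinearMap.ker π').mkQ (x - (Zc C n).subtype (ρ x)) = (LinearMap.ker π').mkQ x
    rw [map_sub, sub_eq_self]
    apply (Submodule.Quotient.mk_eq_zero _).mpr
    rw [hkerπ']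
    exact (ρ x).2
  have hquotproj : Module.Projective R (C.X n ⧸ LinearMap.ker π') := by
    refine Module.Projective.of_split gq (LinearMap.ker π').mkQ ?_
    apply Submodule.linearMap_qext
    rw [LinearMap.comp_assoc]
    exact hsplit.trans (LinearMap.id_comp _).symm
  exact Module.Projective.of_equiv (π'.quotKerEquivOfSurjective hπ'surj)


end C
end CompleteResAux

namespace CompleteResAux
variable {R : Type u} [CommRing R]

section F
variable (F : ChainComplex (ModuleCat.{u} R) ℤ)

/-- restriction of `F` to an `ℕ`-indexed complex -/
noncomputable def resComplex : ChainComplex (ModuleCat.{u} R) ℕ :=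
  ChainComplex.of (fun n => F.X ↑n) (fun n => F.d ↑(n+1) ↑n) (fun n => F.d_comp_d _ _ _)

@[simp] lemma resComplex_X (n : ℕ) : (resComplex F).X n = F.X ↑n := rfl

lemma resComplex_d (n : ℕ) : (resComplex F).d (n+1) n = F.d ↑(n+1) ↑n :=
  by unfold resComplex; exact ChainComplex.of_d (fun n : ℕ => F.X ↑n) (fun n : ℕ => F.d ↑(n+1) ↑n) n

variable (M : ModuleCat.{u} R)

lemma F_exact_concrete (hFexact : ∀ n : ℤ, n ≠ 0 → F.ExactAt n) (n : ℤ) (hn : n ≠ 0) :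
    ∀ x : F.X n, F.d n (n-1) x = 0 → ∃ y : F.X (n+1), F.d (n+1) n y = x := by
  have h := hFexact n hn
  rw [HomologicalComplex.exactAt_iff' F (n+1) n (n-1) (by simp) (by simp)] at h
  rw [ShortComplex.moduleCat_exact_iff] at h
  exact h

/-- the augmentation map -/
noncomputable def resAug
    (hF0 : Nonempty ((↥(F.X 0) ⧸ LinearMap.range ((F.d 1 0).hom : _ →ₗ[R] _)) ≃ₗ[R] M)) :
    (resComplex F).X 0 ⟶ M :=
  ModuleCat.ofHom ((hF0.some : _ ≃ₗ[R] M).toLinearMap ∘ₗ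
    (LinearMap.range ((F.d 1 0).hom : F.X 1 →ₗ[R] F.X 0)).mkQ : F.X (0:ℤ) →ₗ[R] M)

lemma resAug_surjective
    (hF0 : Nonempty ((↥(F.X 0) ⧸ LinearMap.range ((F.d 1 0).hom : _ →ₗ[R] _)) ≃ₗ[R] M)) :
    Function.Surjective (resAug F M hF0) :=
  by
    intro z
    obtain ⟨q, rfl⟩ := hF0.some.surjective z
    obtain ⟨x, rfl⟩ := Submodule.mkQ_surjective _ q
    exact ⟨x, rfl⟩

lemma resAug_comp
    (hF0 : Nonempty ((↥(F.X 0) ⧸ LinearMap.range ((F.d 1 0).hom : _ →ₗ[R] _)) ≃ₗ[R] M)) :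
    (resComplex F).d 1 0 ≫ resAug F M hF0 = 0 := by
  rw [resComplex_d]
  apply ModuleCat.hom_ext
  apply LinearMap.ext
  intro x
  show (hF0.some : _ ≃ₗ[R] M) ((LinearMap.range ((F.d 1 0).hom : F.X 1 →ₗ[R] F.X 0)).mkQ
    (((F.d ↑(0+1) ↑0).hom : F.X ↑(0+1) →ₗ[R] F.X ↑0) x)) = 0
  rw [show ((LinearMap.range ((F.d 1 0).hom : F.X 1 →ₗ[R] F.X 0)).mkQ
    (((F.d ↑(0+1) ↑0).hom : F.X ↑(0+1) →ₗ[R] F.X ↑0) x)) = 0 from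
      (Submodule.Quotient.mk_eq_zero _).mpr ⟨x, rfl⟩, map_zero]

lemma resAug_ker
    (hF0 : Nonempty ((↥(F.X 0) ⧸ LinearMap.range ((F.d 1 0).hom : _ →ₗ[R] _)) ≃ₗ[R] M))
    (x : F.X (0:ℤ)) (hx : resAug F M hF0 x = 0) :
    ∃ y : F.X (1:ℤ), F.d 1 0 y = x := by
  have h1 : (LinearMap.range ((F.d 1 0).hom : F.X 1 →ₗ[R] F.X 0)).mkQ x = 0 := by
    have := hF0.some.injective (a₁ := (LinearMap.range ((F.d 1 0).hom : F.X 1 →ₗ[R] F.X 0)).mkQ x)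
      (a₂ := 0) (by rw [map_zero]; exact hx)
    exact this
  exact (Submodule.Quotient.mk_eq_zero _).mp h1

/-- The projective resolution of `M` built from `F`. -/
noncomputable def resolution
    (hF0 : Nonempty ((↥(F.X 0) ⧸ LinearMap.range ((F.d 1 0).hom : _ →ₗ[R] _)) ≃ₗ[R] M))
    (hfreeF : ∀ n : ℤ, Module.Free R (F.X n))
    (hFexact : ∀ n : ℤ, n ≠ 0 → F.ExactAt n) : ProjectiveResolution M where
  complex := resComplex F
  projective := fun n => by
    haveI := hfreeF ↑n
    exact ModuleCat.projective_of_free (Module.Free.chooseBasis R (F.X ↑n))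
  π := (ChainComplex.toSingle₀Equiv _ _).symm ⟨resAug F M hF0, resAug_comp F M hF0⟩
  quasiIso := ⟨fun n => by
    cases n with
    | zero =>
      rw [ChainComplex.quasiIsoAt₀_iff, ShortComplex.quasiIso_iff_of_zeros']
      rotate_left
      · rfl
      · rfl
      · rfl
      constructor
      · rw [ShortComplex.moduleCat_exact_iff]
        intro x hx
        dsimp at x hx ⊢
        have hx' : resAug F M hF0 x = 0 := by
          rw [← ChainComplex.toSingle₀Equiv_symm_apply_f_zero
            (C := resComplex F) (resAug F M hF0) (resAug_comp F M hF0)]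
          exact hx
        obtain ⟨y, hy⟩ := resAug_ker F M hF0 x hx'
        refine ⟨y, ?_⟩
        show ((resComplex F).d 1 0) y = x
        rw [resComplex_d]
        exact hy
      · rw [ModuleCat.epi_iff_surjective]
        intro z
        obtain ⟨x, hx⟩ := resAug_surjective F M hF0 z
        refine ⟨x, ?_⟩
        show (((ChainComplex.toSingle₀Equiv _ _).symm
          ⟨resAug F M hF0, resAug_comp F M hF0⟩).f 0) x = z
        rw [ChainComplex.toSingle₀Equiv_symm_apply_f_zero]
        exact hx
    | succ n =>
      rw [quasiIsoAt_iff_exactAt']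
      swap
      · apply ChainComplex.exactAt_succ_single_obj
      rw [HomologicalComplex.exactAt_iff' (resComplex F) (n+2) (n+1) n (by simp) (by simp)]
      rw [ShortComplex.moduleCat_exact_iff]
      intro x hx
      dsimp at x hx ⊢
      have hx' : F.d ↑(n+1) ↑n x = 0 := by
        have : ((resComplex F).d (n+1) n) x = 0 := hx
        rwa [resComplex_d] at this
      have hne : ((n+1:ℕ):ℤ) ≠ 0 := by omega
      have hc := F_exact_concrete F hFexact ↑(n+1) hne
      rw [show ((n+1:ℕ):ℤ)-1 = ((n:ℕ):ℤ) from by push_cast; ring,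
        show ((n+1:ℕ):ℤ)+1 = ((n+2:ℕ):ℤ) from by push_cast; ring] at hc
      obtain ⟨y, hy⟩ := hc x hx'
      refine ⟨y, ?_⟩
      show ((resComplex F).d (n+2) (n+1)) y = x
      rw [resComplex_d]
      exact hy⟩

end F
namespace CompleteResAux2
variable {R : Type u} [CommRing R]

lemma subsingleton_of_isZero {X : ModuleCat.{u} R} (h : Limits.IsZero X) : Subsingleton X := by
  constructor
  intro a b
  have h1 : (𝟙 X : X ⟶ X) = 0 := h.eq_of_src _ _
  have ha := congrArg (fun f : X ⟶ X => f a) h1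
  have hb := congrArg (fun f : X ⟶ X => f b) h1
  simp only at ha hb
  calc a = (𝟙 X : X ⟶ X) a := rfl
    _ = (0 : X ⟶ X) a := by rw [h1]
    _ = (0 : X ⟶ X) b := rfl
    _ = (𝟙 X : X ⟶ X) b := by rw [h1]
    _ = b := rfl

lemma subsingleton_iff_isZero (X : ModuleCat.{u} R) : Subsingleton X ↔ Limits.IsZero X :=
  ⟨fun h => ModuleCat.isZero_of_subsingleton X, subsingleton_of_isZero⟩

lemma subsingleton_congr_iso {X Y : ModuleCat.{u} R} (e : X ≅ Y) :
    Subsingleton X ↔ Subsingleton Y :=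
  Equiv.subsingleton_congr e.toLinearEquiv.toEquiv

end CompleteResAux2

namespace CompleteResAux
open CompleteResAux2
variable {R : Type u} [CommRing R]
variable (F : ChainComplex (ModuleCat.{u} R) ℤ) (M : ModuleCat.{u} R)

lemma ext_subsingleton_iff
    (hF0 : Nonempty ((↥(F.X 0) ⧸ LinearMap.range ((F.d 1 0).hom : _ →ₗ[R] _)) ≃ₗ[R] M))
    (hfreeF : ∀ n : ℤ, Module.Free R (F.X n))
    (hFexact : ∀ n : ℤ, n ≠ 0 → F.ExactAt n)
    (k : ℕ) (N : ModuleCat.{u} R) :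
    Subsingleton (((Ext R (ModuleCat.{u} R) (k+1)).obj (op M)).obj N) ↔
    ∀ f : F.X ↑(k+1) →ₗ[R] N, f ∘ₗ ((F.d ↑(k+2) ↑(k+1)).hom : F.X ↑(k+2) →ₗ[R] F.X ↑(k+1)) = 0 →
      ∃ g : F.X ↑k →ₗ[R] N, g ∘ₗ ((F.d ↑(k+1) ↑k).hom : F.X ↑(k+1) →ₗ[R] F.X ↑k) = f := by
  let P := resolution F M hF0 hfreeF hFexact
  rw [subsingleton_congr_iso (P.isoExt (k+1) N)]
  rw [subsingleton_iff_isZero]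
  rw [← HomologicalComplex.exactAt_iff_isZero_homology]
  rw [HomologicalComplex.exactAt_iff' (P.complex.linearYonedaObj R N) k (k+1) (k+2)
    (by simp) (by simp)]
  rw [ShortComplex.moduleCat_exact_iff]
  constructor
  · intro h f hf
    have hf' : ((P.complex.linearYonedaObj R N).d (k+1) (k+2)) (ModuleCat.ofHom f : P.complex.X (k+1) ⟶ N) = 0 := by
      have : ((P.complex.linearYonedaObj R N).d (k+1) (k+2)) (ModuleCat.ofHom f : P.complex.X (k+1) ⟶ N)
          = P.complex.d (k+2) (k+1) ≫ (ModuleCat.ofHom f : P.complex.X (k+1) ⟶ N) := by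
        rfl
      rw [this]
      show (resComplex F).d (k+2) (k+1) ≫ (ModuleCat.ofHom f : (resComplex F).X (k+1) ⟶ N) = 0
      rw [resComplex_d]
      exact ModuleCat.hom_ext hf
    obtain ⟨g, hg⟩ := h (ModuleCat.ofHom f) hf'
    refine ⟨g.hom, ?_⟩
    have hg2 : ((P.complex.linearYonedaObj R N).d k (k+1)) g = ModuleCat.ofHom f := hg
    have : ((P.complex.linearYonedaObj R N).d k (k+1)) g = P.complex.d (k+1) k ≫ g := by
      rfl
    rw [this] at hg2
    have h2 : (resComplex F).d (k+1) k ≫ (g : (resComplex F).X k ⟶ N) = ModuleCat.ofHom f := hg2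
    rw [resComplex_d] at h2
    exact congrArg ModuleCat.Hom.hom h2
  · intro h f hf
    have hf' : (f.hom : F.X ↑(k+1) →ₗ[R] N) ∘ₗ ((F.d ↑(k+2) ↑(k+1)).hom : F.X ↑(k+2) →ₗ[R] F.X ↑(k+1)) = 0 := by
      have hfY : ((P.complex.linearYonedaObj R N).d (k+1) (k+2)) f = 0 := hf
      have : ((P.complex.linearYonedaObj R N).d (k+1) (k+2)) f = P.complex.d (k+2) (k+1) ≫ f := by
        rfl
      rw [this] at hfY
      have h2 : (resComplex F).d (k+2) (k+1) ≫ (f : (resComplex F).X (k+1) ⟶ N) = 0 := hfY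
      rw [resComplex_d] at h2
      exact congrArg ModuleCat.Hom.hom h2
    obtain ⟨g, hg⟩ := h f.hom hf'
    refine ⟨ModuleCat.ofHom g, ?_⟩
    show ((P.complex.linearYonedaObj R N).d k (k+1)) (ModuleCat.ofHom g) = f
    have : ((P.complex.linearYonedaObj R N).d k (k+1)) (ModuleCat.ofHom g) = P.complex.d (k+1) k ≫ ModuleCat.ofHom g := by
      rfl
    rw [this]
    show (resComplex F).d (k+1) k ≫ (ModuleCat.ofHom g : (resComplex F).X k ⟶ N) = f
    rw [resComplex_d]
    exact ModuleCat.hom_ext hg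


namespace CompleteResAux
variable {R : Type u} [CommRing R]

/-- transfer of kernels between equal complexes -/
lemma Zc_transfer (C F : ChainComplex (ModuleCat.{u} R) ℤ) {n : ℤ}
    (hX1 : C.X (n+1) = F.X (n+1)) (hX0 : C.X n = F.X n)
    (hd : HEq (C.d (n+1) n) (F.d (n+1) n)) :
    Nonempty (↥(LinearMap.ker ((C.d (n+1) n).hom : C.X (n+1) →ₗ[R] C.X n)) ≃ₗ[R]
      ↥(LinearMap.ker ((F.d (n+1) n).hom : F.X (n+1) →ₗ[R] F.X n))) := by
  have hcomm : C.d (n+1) n = eqToHom hX1 ≫ F.d (n+1) n ≫ eqToHom hX0.symm :=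
    (conj_eqToHom_iff_heq _ _ hX1 hX0).2 hd
  let e1 : C.X (n+1) ≃ₗ[R] F.X (n+1) := (eqToIso hX1).toLinearEquiv
  have hker : (LinearMap.ker ((C.d (n+1) n).hom : C.X (n+1) →ₗ[R] C.X n)).map (e1 : C.X (n+1) →ₗ[R] F.X (n+1))
      = LinearMap.ker ((F.d (n+1) n).hom : F.X (n+1) →ₗ[R] F.X n) := by
    ext y
    simp only [Submodule.mem_map, LinearMap.mem_ker]
    constructor
    · rintro ⟨x, hx, rfl⟩
      have : C.d (n+1) n x = eqToHom hX0.symm (F.d (n+1) n (eqToHom hX1 x)) := by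
        rw [hcomm]; rfl
      rw [this] at hx
      have h0 : F.d (n+1) n (eqToHom hX1 x) = 0 := by
        apply (eqToIso hX0.symm).toLinearEquiv.injective
        show (eqToHom hX0.symm : F.X n ⟶ C.X n) ((F.d (n+1) n) ((eqToHom hX1) x))
          = (eqToHom hX0.symm : F.X n ⟶ C.X n) 0
        rw [map_zero]
        exact hx
      exact h0
    · intro hy
      refine ⟨e1.symm y, ?_, by simp⟩
      have : C.d (n+1) n (e1.symm y) = eqToHom hX0.symm (F.d (n+1) n (eqToHom hX1 (e1.symm y))) := by
        rw [hcomm]; rfl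
      rw [this]
      have he : (eqToHom hX1 : C.X (n+1) ⟶ F.X (n+1)) (e1.symm y) = y := e1.apply_symm_apply y
      rw [he, hy, map_zero]
  exact ⟨(e1.submoduleMap _).trans (LinearEquiv.ofEq _ _ hker)⟩

section FM
variable (F : ChainComplex (ModuleCat.{u} R) ℤ) (M : ModuleCat.{u} R)

/-- high-degree cycles of `F` are projective when Ext vanishes -/
lemma ZF_projective_of_ext
    (hF0 : Nonempty ((↥(F.X 0) ⧸ LinearMap.range ((F.d 1 0).hom : _ →ₗ[R] _)) ≃ₗ[R] M))
    (hfreeF : ∀ n : ℤ, Module.Free R (F.X n))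
    (hFexact : ∀ n : ℤ, n ≠ 0 → F.ExactAt n)
    (k : ℕ) (hk : 1 ≤ k)
    (hsub : Subsingleton (((Ext R (ModuleCat.{u} R) (k+1)).obj (op M)).obj
      (ModuleCat.of R ↥(Zc F (↑k : ℤ))))) :
    Module.Projective R ↥(Zc F (↑k : ℤ)) := by
  rw [ext_subsingleton_iff F M hF0 hfreeF hFexact k] at hsub
  set f : F.X ((↑(k+1) : ℤ)) →ₗ[R] (ModuleCat.of R ↥(Zc F (↑k : ℤ))) :=
    LinearMap.codRestrict (Zc F (↑k : ℤ)) ((F.d ↑(k+1) ↑k).hom : F.X ↑(k+1) →ₗ[R] F.X ↑k)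
      (fun x => d_mem_Zc F x) with hf
  have hzero : f ∘ₗ ((F.d ↑(k+2) ↑(k+1)).hom : F.X ↑(k+2) →ₗ[R] F.X ↑(k+1)) = 0 := by
    apply LinearMap.ext
    intro y
    apply Subtype.ext
    show (F.d ↑(k+1) ↑k) ((F.d ↑(k+2) ↑(k+1)) y) = 0
    calc (F.d ↑(k+1) ↑k) ((F.d ↑(k+2) ↑(k+1)) y) = (F.d ↑(k+2) ↑(k+1) ≫ F.d ↑(k+1) ↑k) y := rfl
      _ = 0 := by rw [F.d_comp_d]; rfl
  obtain ⟨g, hg⟩ := hsub f hzero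
  have hret : ∀ z : ↥(Zc F (↑k : ℤ)), g (z : F.X ↑k) = z := by
    intro z
    have hkne : ((k:ℕ):ℤ) ≠ 0 := by omega
    have hc := F_exact_concrete F hFexact ↑k hkne
    rw [show ((k:ℕ):ℤ)+1 = ((k+1:ℕ):ℤ) from by push_cast; ring] at hc
    obtain ⟨y, hy⟩ := hc (z : F.X ↑k) z.2
    have h1 : g (((F.d ↑(k+1) ↑k).hom : F.X ↑(k+1) →ₗ[R] F.X ↑k) y) = f y :=
      congrArg (fun h => h y) hg
    rw [hy] at h1
    rw [h1]
    apply Subtype.ext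
    show (F.d ↑(k+1) ↑k) y = (z : F.X ↑k)
    exact hy
  haveI := hfreeF (↑k : ℤ)
  exact Module.Projective.of_split (Zc F (↑k : ℤ)).subtype g
    (by ext z; exact congrArg Subtype.val (hret z))

/-- Ext vanishes when nearby cycles of `F` are projective -/
lemma ext_vanish_of_proj
    (hF0 : Nonempty ((↥(F.X 0) ⧸ LinearMap.range ((F.d 1 0).hom : _ →ₗ[R] _)) ≃ₗ[R] M))
    (hfreeF : ∀ n : ℤ, Module.Free R (F.X n))
    (hFexact : ∀ n : ℤ, n ≠ 0 → F.ExactAt n)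
    (k : ℕ) (hk : 2 ≤ k)
    (hp1 : Module.Projective R ↥(Zc F (↑k : ℤ)))
    (hp2 : Module.Projective R ↥(Zc F ((↑k : ℤ)-1)))
    (N : ModuleCat.{u} R) :
    Subsingleton (((Ext R (ModuleCat.{u} R) (k+1)).obj (op M)).obj N) := by
  rw [ext_subsingleton_iff F M hF0 hfreeF hFexact k]
  intro f hf
  -- the surjection onto the cycles in degree k
  set π : F.X ((↑(k+1) : ℤ)) →ₗ[R] ↥(Zc F (↑k : ℤ)) :=
    LinearMap.codRestrict (Zc F (↑k : ℤ)) ((F.d ↑(k+1) ↑k).hom : F.X ↑(k+1) →ₗ[R] F.X ↑k)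
      (fun x => d_mem_Zc F x) with hπdef
  have hπsurj : Function.Surjective π := by
    intro z
    have hkne : ((k:ℕ):ℤ) ≠ 0 := by omega
    have hc := F_exact_concrete F hFexact ↑k hkne
    rw [show ((k:ℕ):ℤ)+1 = ((k+1:ℕ):ℤ) from by push_cast; ring] at hc
    obtain ⟨y, hy⟩ := hc (z : F.X ↑k) z.2
    exact ⟨y, Subtype.ext hy⟩
  obtain ⟨u, hu⟩ := Module.projective_lifting_property π LinearMap.id hπsurj
  -- `f` kills the kernel of `π`
  have hfker : ∀ x : F.X ((↑(k+1):ℤ)), π x = 0 → f x = 0 := by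
    intro x hx
    have hxd : ((F.d ↑(k+1) ↑k).hom : F.X ↑(k+1) →ₗ[R] F.X ↑k) x = 0 :=
      congrArg Subtype.val hx
    have hne : ((k+1:ℕ):ℤ) ≠ 0 := by omega
    have hc := F_exact_concrete F hFexact ↑(k+1) hne
    rw [show ((k+1:ℕ):ℤ)-1 = ((k:ℕ):ℤ) from by push_cast; ring,
      show ((k+1:ℕ):ℤ)+1 = ((k+2:ℕ):ℤ) from by push_cast; ring] at hc
    obtain ⟨y, hy⟩ := hc x hxd
    rw [← hy]
    exact congrArg (fun h => h y) hf
  -- retraction of `F.X k` onto the cycles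
  set π' : F.X ((↑k:ℤ)) →ₗ[R] ↥(Zc F ((↑k:ℤ)-1)) :=
    LinearMap.codRestrict (Zc F ((↑k:ℤ)-1)) ((F.d ↑k (↑k-1)).hom : F.X ↑k →ₗ[R] F.X (↑k-1))
      (fun x => d_mem_Zc F x) with hπ'def
  have hπ'surj : Function.Surjective π' := by
    intro z
    have hkne : ((k:ℕ):ℤ)-1 ≠ 0 := by omega
    have hc := F_exact_concrete F hFexact (↑k-1) hkne
    rw [show ((k:ℕ):ℤ)-1+1 = ((k:ℕ):ℤ) from by ring] at hc
    obtain ⟨y, hy⟩ := hc (z : F.X (↑k-1)) z.2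
    exact ⟨y, Subtype.ext hy⟩
  obtain ⟨τ, hτ⟩ := Module.projective_lifting_property π' LinearMap.id hπ'surj
  have hτval : ∀ w, ((F.d ↑k (↑k-1)).hom : F.X ↑k →ₗ[R] F.X (↑k-1)) (τ w) = (w : F.X (↑k-1)) := by
    intro w
    have : π' (τ w) = w := congrArg (fun h => h w) hτ
    exact congrArg Subtype.val this
  set r : F.X ((↑k:ℤ)) →ₗ[R] ↥(Zc F (↑k:ℤ)) :=
    LinearMap.codRestrict (Zc F (↑k:ℤ)) (LinearMap.id - τ ∘ₗ π')
      (fun x => by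
        show (F.d ↑k (↑k-1)) (x - τ (π' x)) = 0
        rw [map_sub, hτval (π' x)]
        show (F.d ↑k (↑k-1)) x - (F.d ↑k (↑k-1)) x = 0
        rw [sub_self]) with hrdef
  refine ⟨(f ∘ₗ u) ∘ₗ r, ?_⟩
  apply LinearMap.ext
  intro x
  -- r (d x) = π x
  have hr : r (((F.d ↑(k+1) ↑k).hom : F.X ↑(k+1) →ₗ[R] F.X ↑k) x) = π x := by
    apply Subtype.ext
    show (F.d ↑(k+1) ↑k) x - τ (π' ((F.d ↑(k+1) ↑k) x)) = (F.d ↑(k+1) ↑k) x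
    have h0 : π' (((F.d ↑(k+1) ↑k).hom : F.X ↑(k+1) →ₗ[R] F.X ↑k) x) = 0 := by
      apply Subtype.ext
      show (F.d ↑k (↑k-1)) ((F.d ↑(k+1) ↑k) x) = 0
      calc (F.d ↑k (↑k-1)) ((F.d ↑(k+1) ↑k) x) = (F.d ↑(k+1) ↑k ≫ F.d ↑k (↑k-1)) x := rfl
        _ = 0 := by rw [F.d_comp_d]; rfl
    rw [h0, map_zero, sub_zero]
  show f (u (r ((F.d ↑(k+1) ↑k) x))) = f x
  rw [hr]
  -- f (u (π x)) = f x
  have hker : π (u (π x) - x) = 0 := by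
    have : π (u (π x)) = π x := by
      have := congrArg (fun h => h (π x)) hu
      exact this
    rw [map_sub, this, sub_self]
  have := hfker _ hker
  rw [map_sub] at this
  have := sub_eq_zero.mp this
  exact this

end FM
end CompleteResAux
end CompleteResAux
end CompleteResAux

open CompleteResAux CompleteResAux.CompleteResAux CompleteResAux.CompleteResAux.CompleteResAux CompleteResAux.CompleteResAux2 in
/-- Let `C` be a totally acyclic complex of finitely generated free modules over a
Gorenstein Noetherian local ring `R`, which is a complete resolution of a finitely
generated `R`-module `M`, i.e. `C` agrees with a free resolution `F` of `M` in all
degrees `≥ i` for some `i ≥ 0`.  Then `C` is contractible if and only if `M` has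
finite projective dimension over `R`. -/
theorem complete_resolution_contractible_iff_finite_projdim
    {R : Type u} [CommRing R] [IsLocalRing R] [IsNoetherianRing R]
    (hGor : IsGorensteinLocal R)
    (M : ModuleCat.{u} R) (hM : Module.Finite R M)
    (C : ChainComplex (ModuleCat.{u} R) ℤ)
    (hfreeC : ∀ n : ℤ, Module.Free R (C.X n))
    (hfinC : ∀ n : ℤ, Module.Finite R (C.X n))
    (hexactC : ∀ n : ℤ, C.ExactAt n)
    (hdualC : ∀ n : ℤ,
      Function.Exact (((C.d n (n - 1)).hom : _ →ₗ[R] _).dualMap)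
        (((C.d (n + 1) n).hom : _ →ₗ[R] _).dualMap))
    -- `F` is a free resolution of `M` by finitely generated free modules
    (F : ChainComplex (ModuleCat.{u} R) ℤ)
    (hfreeF : ∀ n : ℤ, Module.Free R (F.X n))
    (hfinF : ∀ n : ℤ, Module.Finite R (F.X n))
    (hFneg : ∀ n : ℤ, n < 0 → Subsingleton (F.X n))
    (hFexact : ∀ n : ℤ, n ≠ 0 → F.ExactAt n)
    (hF0 : Nonempty ((↥(F.X 0) ⧸ LinearMap.range ((F.d 1 0).hom : _ →ₗ[R] _)) ≃ₗ[R] M))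
    -- `C` agrees with `F` in all degrees `≥ i` for some `i ≥ 0`
    (hagree : ∃ i : ℤ, 0 ≤ i ∧ (∀ n ≥ i, C.X n = F.X n) ∧
      ∀ n ≥ i, HEq (C.d (n + 1) n) (F.d (n + 1) n)) :
    Nonempty (Homotopy (𝟙 C) 0) ↔ HasFiniteProjectiveDimension R M := by
  classical
  obtain ⟨i, hi0, hXagree, hdagree⟩ := hagree
  constructor
  · rintro ⟨h⟩
    -- all cycles of `C` are projective
    have hZC : ∀ n : ℤ, Module.Projective R ↥(Zc C n) := fun n => by
      obtain ⟨σ, hσ⟩ := sections_of_homotopy C h n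
      exact projective_of_section C (hfreeC (n+1)) σ hσ
    -- transfer to `F` in degrees `≥ i`
    have hZF : ∀ n : ℤ, i ≤ n →
        Module.Projective R ↥(LinearMap.ker ((F.d (n+1) n).hom : F.X (n+1) →ₗ[R] F.X n)) := by
      intro n hn
      obtain ⟨e⟩ := Zc_transfer C F (hXagree (n+1) (by omega)) (hXagree n hn) (hdagree n hn)
      have h1 : Module.Projective R ↥(LinearMap.ker ((C.d (n+1) n).hom : C.X (n+1) →ₗ[R] C.X n)) := by
        have h2 := hZC (n+1)
        have h3 : Module.Projective R
            ↥(LinearMap.ker ((C.d (n+1) (n+1-1)).hom : C.X (n+1) →ₗ[R] C.X (n+1-1))) := h2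
        rwa [show (n+1-1:ℤ) = n from by ring] at h3
      exact Module.Projective.of_equiv e
    refine ⟨(i+3).toNat, fun N j hj => ?_⟩
    obtain ⟨k, rfl⟩ : ∃ k, j = k + 1 := ⟨j - 1, by omega⟩
    have hki : (i:ℤ) + 3 ≤ (k:ℤ) := by omega
    apply ext_vanish_of_proj F M hF0 hfreeF hFexact k (by omega)
    · -- Zc F k projective
      have h4 := hZF (↑k-1) (by omega)
      rw [show ((k:ℕ):ℤ)-1+1 = ((k:ℕ):ℤ) from by ring] at h4
      exact h4
    · -- Zc F (k-1) projective
      have h4 := hZF (↑k-2) (by omega)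
      rw [show ((k:ℕ):ℤ)-2+1 = ((k:ℕ):ℤ)-1 from by ring] at h4
      have h5 : Module.Projective R
          ↥(LinearMap.ker ((F.d (↑k-1) ((↑k:ℤ)-1-1)).hom : F.X (↑k-1) →ₗ[R] F.X (↑k-1-1))) := by
        rwa [show ((k:ℕ):ℤ)-1-1 = ((k:ℕ):ℤ)-2 from by ring]
      exact h5
  · rintro ⟨n₀, hpd⟩
    -- high-degree cycles of `F` are projective
    have hZF : ∀ k : ℕ, 1 ≤ k → n₀ < k+1 → Module.Projective R ↥(Zc F (↑k : ℤ)) := by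
      intro k hk1 hk2
      exact ZF_projective_of_ext F M hF0 hfreeF hFexact k hk1
        (hpd (ModuleCat.of R ↥(Zc F (↑k:ℤ))) (k+1) hk2)
    set N₁ : ℤ := max i (↑n₀ + 1) with hN₁
    -- high-degree cycles of `C` are projective
    have hhigh : ∀ m : ℤ, N₁ + 1 ≤ m → Module.Projective R ↥(Zc C m) := by
      intro m hm
      obtain ⟨n, rfl⟩ : ∃ n : ℤ, m = n + 1 := ⟨m - 1, by omega⟩
      have hn : i ≤ n := by omega
      obtain ⟨e⟩ := Zc_transfer C F (hXagree (n+1) (by omega)) (hXagree n hn) (hdagree n hn)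
      have hkF : Module.Projective R
          ↥(LinearMap.ker ((F.d (n+1) n).hom : F.X (n+1) →ₗ[R] F.X n)) := by
        obtain ⟨k, hkval⟩ : ∃ k : ℕ, (k:ℤ) = n + 1 := ⟨(n+1).toNat, by omega⟩
        have hp := hZF k (by omega) (by omega)
        have hp2 : Module.Projective R
            ↥(LinearMap.ker ((F.d ((k:ℤ)) ((k:ℤ)-1)).hom : F.X (k:ℤ) →ₗ[R] F.X ((k:ℤ)-1))) := hp
        rw [hkval, show (n+1-1:ℤ) = n from by ring] at hp2
        exact hp2
      have h1 : Module.Projective R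
          ↥(LinearMap.ker ((C.d (n+1) n).hom : C.X (n+1) →ₗ[R] C.X n)) :=
        Module.Projective.of_equiv e.symm
      have h3 : Module.Projective R
          ↥(LinearMap.ker ((C.d (n+1) ((n+1:ℤ)-1)).hom : C.X (n+1) →ₗ[R] C.X (n+1-1))) := by
        rwa [show (n+1-1:ℤ) = n from by ring]
      exact h3
    -- all cycles of `C` are projective, by descending induction
    have hall : ∀ m : ℤ, Module.Projective R ↥(Zc C m) := by
      have key : ∀ t : ℕ, ∀ m : ℤ, N₁ + 1 ≤ m + t → Module.Projective R ↥(Zc C m) := by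
        intro t
        induction t with
        | zero => intro m hm; exact hhigh m (by omega)
        | succ t ih =>
          intro m hm
          by_cases h' : N₁ + 1 ≤ m
          · exact hhigh m h'
          · have hup := ih (m+1) (by push_cast; omega)
            have hdn := step_down C hfreeC hfinC hexactC hdualC (m+1) hup
            rwa [show (m+1-1:ℤ) = m from by ring] at hdn
      intro m
      exact key (N₁ + 1 - m).toNat m (by omega)
    refine ⟨homotopyOfSections C
      (fun n => (section_of_projective C (hall n) (hexactC n)).choose)
      (fun n => (section_of_projective C (hall n) (hexactC n)).choose_spec)⟩
end
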